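/- Let T be a tiling of an n-gon and σ = Scott(T). Then σ(i) = i + 2 (mod n) if and only if there exists a tiling T' flip-equivalent to T having a triangular ear at vertex i+1 (i.e. containing the triangle {i, i+1, i+2} with diagonal [i, i+2]). -/

import Mathlib

open scoped Classical

/-!  Combinatorial model of tilings of a convex `n`-gon.
The vertices of the polygon are `ZMod n`, listed clockwise as `0,1,...,n-1`.
A tile is recorded as the finset of its vertices. -/

/-- The next vertex of `Q` strictly clockwise after `a`. -/
noncomputable def cnext (n : ℕ) (Q : Finset (ZMod n)) (a : ZMod n) : ZMod n :=
  if h : ∃ k : ℕ, 0 < k ∧ k ≤ n ∧ a + (k : ZMod n) ∈ Q then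
    a + ((Nat.find h : ℕ) : ZMod n)
  else a

/-- The previous vertex of `Q` strictly anticlockwise before `a`. -/
noncomputable def cprev (n : ℕ) (Q : Finset (ZMod n)) (a : ZMod n) : ZMod n :=
  if h : ∃ k : ℕ, 0 < k ∧ k ≤ n ∧ a - (k : ZMod n) ∈ Q then
    a - ((Nat.find h : ℕ) : ZMod n)
  else a

/-- `(a,b)` is a (directed, clockwise) edge of the tile `Q`:
`b` is the next vertex of `Q` clockwise after `a`. -/
noncomputable def IsEdge (n : ℕ) (Q : Finset (ZMod n)) (a b : ZMod n) : Prop :=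
  a ∈ Q ∧ b ∈ Q ∧ a ≠ b ∧ b = cnext n Q a

/-- `x` lies strictly inside the clockwise arc from `a` to `b`. -/
def Between (n : ℕ) (a x b : ZMod n) : Prop :=
  0 < (x - a).val ∧ (x - a).val < (b - a).val

/-- The chords `{a,b}` and `{c,d}` of a convex `m`-gon cross in its interior. -/
def Crosses (m : ℕ) (a b c d : ZMod m) : Prop :=
  Between m a c b ∧ Between m b d a

/-- A tiling of the convex `n`-gon by pairwise non-crossing diagonals, recorded by
its set of tiles.  Every tile has at least 3 vertices, every boundary edge
`[i,i+1]` is an edge of exactly one tile, every diagonal (non-boundary edge of a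
tile) is shared with exactly one other tile (traversed in the opposite
direction), two distinct tiles meet in at most one edge, and edges of tiles do
not cross. -/
structure PolygonTiling (n : ℕ) where
  tiles : Finset (Finset (ZMod n))
  three_le : ∀ Q ∈ tiles, 3 ≤ Q.card
  boundary_edge : ∀ i : ZMod n, ∃! Q, Q ∈ tiles ∧ IsEdge n Q i (i + 1)
  diag_shared : ∀ Q ∈ tiles, ∀ a b : ZMod n, IsEdge n Q a b → b ≠ a + 1 →
    ∃! Q', Q' ∈ tiles ∧ Q' ≠ Q ∧ IsEdge n Q' b a
  inter_small : ∀ Q ∈ tiles, ∀ Q' ∈ tiles, Q ≠ Q' → (Q ∩ Q').card ≤ 2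
  noncross : ∀ Q ∈ tiles, ∀ Q' ∈ tiles, ∀ a b c d : ZMod n,
    IsEdge n Q a b → IsEdge n Q' c d → ¬ Crosses n a b c d

/-- The set of diagonals of a tiling, as unordered pairs of vertices. -/
def diagonalsSet (n : ℕ) (T : PolygonTiling n) : Set (Finset (ZMod n)) :=
  {e | ∃ Q ∈ T.tiles, ∃ a b : ZMod n, IsEdge n Q a b ∧ b ≠ a + 1 ∧ e = {a, b}}

/-- One step of Scott's strand construction.  A state `(Q, a)` means the strand is
entering tile `Q` through its directed edge `(a, cnext Q a)`.  Inside `Q` the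
strand uses the segment parallel to the edge `[cprev Q a, a]`, oriented from `a`
towards `p := cprev Q a`, leaving `Q` through the edge `(pp, p)` where
`pp := cprev Q p`.  If that edge is a boundary edge the strand terminates at the
vertex `p`; otherwise it continues into the unique other tile having this edge. -/
noncomputable def scottStep (n : ℕ) (T : PolygonTiling n) :
    Finset (ZMod n) × ZMod n → (Finset (ZMod n) × ZMod n) ⊕ ZMod n := fun s =>
  let Q := s.1
  let a := s.2
  let p := cprev n Q a
  let pp := cprev n Q p
  if p = pp + 1 then Sum.inr p
  else if h : ∃ Q', Q' ∈ T.tiles ∧ Q' ≠ Q ∧ IsEdge n Q' p pp then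
    Sum.inl (Classical.choose h, p)
  else Sum.inr p

/-- The tile in which the strand starting at vertex `x` begins: the unique tile
containing the boundary edge `(x, x+1)`. -/
noncomputable def startTile (n : ℕ) (T : PolygonTiling n) (x : ZMod n) :
    Finset (ZMod n) :=
  Classical.choose (T.boundary_edge x)

/-- The sequence of states of the strand starting at vertex `x`
(`none` after the strand has terminated). -/
noncomputable def strandSeq (n : ℕ) (T : PolygonTiling n) (x : ZMod n) :
    ℕ → Option (Finset (ZMod n) × ZMod n)
  | 0 => some (startTile n T x, x)
  | k + 1 =>
    match strandSeq n T x k with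
    | none => none
    | some s =>
      match scottStep n T s with
      | Sum.inl s' => some s'
      | Sum.inr _ => none

/-- The strand starting at `x` uses a strand segment of tile `Q`, entering `Q`
in state `s = (Q, a)`. -/
def StrandVisits (n : ℕ) (T : PolygonTiling n) (x : ZMod n)
    (s : Finset (ZMod n) × ZMod n) : Prop :=
  ∃ k : ℕ, strandSeq n T x k = some s

/-- Follow a strand for at most `fuel` steps, returning its final vertex. -/
noncomputable def scottRun (n : ℕ) (T : PolygonTiling n) :
    ℕ → Finset (ZMod n) × ZMod n → ZMod n
  | 0, s => s.2
  | k + 1, s =>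
    match scottStep n T s with
    | Sum.inr y => y
    | Sum.inl s' => scottRun n T k s'

/-- The Scott map of the tiling `T`: the strand starting at vertex `x` ends at
vertex `scott n T x`.  (A strand uses at most one segment per tile, so
`T.tiles.card` steps always suffice.) -/
noncomputable def scott (n : ℕ) (T : PolygonTiling n) (x : ZMod n) : ZMod n :=
  scottRun n T T.tiles.card (startTile n T x, x)

/-- A triangulation: all tiles are triangles. -/
def IsTriangulation (n : ℕ) (T : PolygonTiling n) : Prop :=
  ∀ Q ∈ T.tiles, Q.card = 3

/-- An ear of a tiling: a tile exactly one of whose edges is a diagonal. -/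
noncomputable def IsEar (n : ℕ) (T : PolygonTiling n) (Q : Finset (ZMod n)) : Prop :=
  Q ∈ T.tiles ∧ ∃! p : ZMod n × ZMod n, IsEdge n Q p.1 p.2 ∧ p.2 ≠ p.1 + 1

/-- A vertex is simple if it is not an endpoint of any diagonal. -/
def IsSimpleVertex (n : ℕ) (T : PolygonTiling n) (v : ZMod n) : Prop :=
  ∀ e ∈ diagonalsSet n T, v ∉ e

/-- The open dual graph of a tiling: one vertex per tile, two tiles adjacent iff
they share a diagonal. -/
noncomputable def dualGraph (n : ℕ) (T : PolygonTiling n) :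
    SimpleGraph {Q // Q ∈ T.tiles} where
  Adj Q Q' := Q ≠ Q' ∧ ∃ a b : ZMod n, b ≠ a + 1 ∧
    ((IsEdge n Q.1 a b ∧ IsEdge n Q'.1 b a) ∨ (IsEdge n Q.1 b a ∧ IsEdge n Q'.1 a b))
  symm := by
    constructor
    rintro Q Q' ⟨hne, a, b, hb, h⟩
    refine ⟨hne.symm, a, b, hb, ?_⟩
    rcases h with ⟨h1, h2⟩ | ⟨h1, h2⟩
    · exact Or.inr ⟨h2, h1⟩
    · exact Or.inl ⟨h2, h1⟩
  loopless := by constructor; rintro Q ⟨hne, -⟩; exact hne rfl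

/-- `T'` is obtained from `T` by a single flip: a quadrilateral `a,b,c,d`
(clockwise) tiled by the triangles `{a,b,c}, {a,c,d}` (diagonal `[a,c]`) is
retiled by the triangles `{a,b,d}, {b,c,d}` (diagonal `[b,d]`). -/
def FlipStep (n : ℕ) (T T' : PolygonTiling n) : Prop :=
  ∃ a b c d : ZMod n, Between n a b c ∧ Between n c d a ∧
    ({a, b, c} : Finset (ZMod n)) ∈ T.tiles ∧ ({a, c, d} : Finset (ZMod n)) ∈ T.tiles ∧
    T'.tiles = (T.tiles \ {({a, b, c} : Finset (ZMod n)), {a, c, d}}) ∪ {{a, b, d}, {b, c, d}}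

/-- Flip equivalence: the equivalence relation generated by flips. -/
def FlipEquiv (n : ℕ) (T T' : PolygonTiling n) : Prop :=
  Relation.EqvGen (FlipStep n) T T'

/-- The midpoint of the (clockwise) tile edge starting at vertex `a`, recorded as
a vertex of the refined `2n`-gon (vertex `v` of the polygon becomes `2v`). -/
def midpt (n : ℕ) (a : ZMod n) : ZMod (2 * n) := ((2 * a.val + 1 : ℕ) : ZMod (2 * n))

/-- The first vertex of the edge through which the strand segment entering tile `Q`
in state `(Q,a)` leaves `Q`. -/
noncomputable def segTarget (n : ℕ) (Q : Finset (ZMod n)) (a : ZMod n) : ZMod n :=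
  cprev n Q (cprev n Q a)

/-- The strand segments of tile `Q` entering in states `(Q,a)` and `(Q,c)` cross
inside `Q` (their chords, joining midpoints of edges of `Q`, interleave). -/
noncomputable def SegCross (n : ℕ) (Q : Finset (ZMod n)) (a c : ZMod n) : Prop :=
  Crosses (2 * n) (midpt n a) (midpt n (segTarget n Q a))
    (midpt n c) (midpt n (segTarget n Q c))

/-- The set of tiles inside which the strands starting at `x` and at `y` cross. -/
noncomputable def crossingTiles (n : ℕ) (T : PolygonTiling n) (x y : ZMod n) :
    Set (Finset (ZMod n)) :=
  {Q | Q ∈ T.tiles ∧ ∃ a c : ZMod n,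
    StrandVisits n T x (Q, a) ∧ StrandVisits n T y (Q, c) ∧ SegCross n Q a c}

/-- `v` lies on the closed clockwise arc from `i` to `j`. -/
def InArc (n : ℕ) (i j v : ZMod n) : Prop := (v - i).val ≤ (j - i).val

set_option linter.unusedSectionVars false
set_option maxHeartbeats 1000000
section Toolkit
variable {n : ℕ} [NeZero n]

/-- clockwise distance -/
def cwd (a b : ZMod n) : ℕ := (b - a).val

lemma cwd_lt (a b : ZMod n) : cwd a b < n := ZMod.val_lt _

lemma cwd_eq_zero_iff {a b : ZMod n} : cwd a b = 0 ↔ a = b := by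
  rw [cwd, ZMod.val_eq_zero, sub_eq_zero, eq_comm]

lemma cwd_self (a : ZMod n) : cwd a a = 0 := cwd_eq_zero_iff.2 rfl

lemma add_cwd (a b : ZMod n) : a + (cwd a b : ZMod n) = b := by
  rw [cwd, ZMod.natCast_val, ZMod.cast_id]; ring

lemma cwd_add_cast (a : ZMod n) (k : ℕ) (hk : k < n) : cwd a (a + (k : ZMod n)) = k := by
  rw [cwd, add_sub_cancel_left, ZMod.val_natCast_of_lt hk]

lemma cwd_sub_cast (a : ZMod n) (k : ℕ) (hk : k < n) :
    cwd (a - (k : ZMod n)) a = k := by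
  rw [cwd, sub_sub_cancel, ZMod.val_natCast_of_lt hk]

lemma cwd_inj {a b c : ZMod n} (h : cwd a b = cwd a c) : b = c := by
  have h1 := add_cwd a b
  have h2 := add_cwd a c
  rw [h] at h1; exact h1.symm.trans h2

lemma cwd_add_cases (a b c : ZMod n) :
    cwd a c = cwd a b + cwd b c ∨ cwd a c + n = cwd a b + cwd b c := by
  have h : c - a = (b - a) + (c - b) := by ring
  have := ZMod.val_add (b - a) (c - b)
  rw [← h] at this
  have h1 : cwd a b < n := cwd_lt a b
  have h2 : cwd b c < n := cwd_lt b c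
  have h3 : cwd a c < n := cwd_lt a c
  unfold cwd at *
  rcases Nat.lt_or_ge ((b - a).val + (c - b).val) n with hlt | hge
  · left; rw [this, Nat.mod_eq_of_lt hlt]
  · right
    have : (c - a).val = (b-a).val + (c-b).val - n := by
      rw [this, Nat.mod_eq_sub_mod hge, Nat.mod_eq_of_lt (by omega)]
    omega

lemma cwd_rev {a b : ZMod n} (h : a ≠ b) : cwd a b + cwd b a = n := by
  rcases cwd_add_cases a b a with h1 | h1
  · rw [cwd_self] at h1
    have e1 : cwd a b ≠ 0 := fun hh => h (cwd_eq_zero_iff.1 hh)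
    omega
  · rw [cwd_self] at h1; omega

end Toolkit
section CN
variable {n : ℕ} [NeZero n]

lemma sub_cwd (a c : ZMod n) : a - (cwd c a : ZMod n) = c := by
  rw [cwd, ZMod.natCast_val, ZMod.cast_id]; ring

lemma cwd_inj' {a b c : ZMod n} (h : cwd b a = cwd c a) : b = c := by
  have h1 := sub_cwd a b
  have h2 := sub_cwd a c
  rw [h] at h1; exact h1.symm.trans h2

lemma cnext_spec {Q : Finset (ZMod n)} {a x : ZMod n} (hx : x ∈ Q) (hxa : x ≠ a) :
    cnext n Q a ∈ Q ∧ cnext n Q a ≠ a ∧ ∀ c ∈ Q, c ≠ a → cwd a (cnext n Q a) ≤ cwd a c := by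
  have hvalid : ∀ c ∈ Q, c ≠ a → (0 < cwd a c ∧ cwd a c ≤ n ∧ a + ((cwd a c : ℕ) : ZMod n) ∈ Q) := by
    intro c hc hca
    refine ⟨?_, (cwd_lt a c).le, by rw [add_cwd]; exact hc⟩
    rcases Nat.eq_zero_or_pos (cwd a c) with h|h
    · exact absurd (cwd_eq_zero_iff.1 h).symm hca
    · exact h
  have hex : ∃ k : ℕ, 0 < k ∧ k ≤ n ∧ a + (k : ZMod n) ∈ Q := ⟨cwd a x, hvalid x hx hxa⟩
  rw [cnext, dif_pos hex]
  obtain ⟨hk0, hkn, hkQ⟩ := Nat.find_spec hex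
  have hklt : Nat.find hex < n := by
    have h1 : Nat.find hex ≤ cwd a x := Nat.find_min' hex (hvalid x hx hxa)
    have := cwd_lt a x
    omega
  have hcwd : cwd a (a + ((Nat.find hex : ℕ) : ZMod n)) = Nat.find hex := cwd_add_cast a _ hklt
  refine ⟨hkQ, ?_, ?_⟩
  · intro h
    rw [h] at hcwd; rw [cwd_self] at hcwd; omega
  · intro c hc hca
    rw [hcwd]
    exact Nat.find_min' hex (hvalid c hc hca)

lemma cnext_eq {Q : Finset (ZMod n)} {a b : ZMod n} (hb : b ∈ Q) (hba : b ≠ a)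
    (hmin : ∀ c ∈ Q, c ≠ a → cwd a b ≤ cwd a c) : cnext n Q a = b := by
  obtain ⟨h1, h2, h3⟩ := cnext_spec hb hba
  exact cwd_inj (Nat.le_antisymm (h3 b hb hba) (hmin _ h1 h2))

lemma cprev_spec {Q : Finset (ZMod n)} {a x : ZMod n} (hx : x ∈ Q) (hxa : x ≠ a) :
    cprev n Q a ∈ Q ∧ cprev n Q a ≠ a ∧ ∀ c ∈ Q, c ≠ a → cwd (cprev n Q a) a ≤ cwd c a := by
  have hvalid : ∀ c ∈ Q, c ≠ a → (0 < cwd c a ∧ cwd c a ≤ n ∧ a - ((cwd c a : ℕ) : ZMod n) ∈ Q) := by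
    intro c hc hca
    refine ⟨?_, (cwd_lt c a).le, by rw [sub_cwd]; exact hc⟩
    rcases Nat.eq_zero_or_pos (cwd c a) with h|h
    · exact absurd (cwd_eq_zero_iff.1 h) hca
    · exact h
  have hex : ∃ k : ℕ, 0 < k ∧ k ≤ n ∧ a - (k : ZMod n) ∈ Q := ⟨cwd x a, hvalid x hx hxa⟩
  rw [cprev, dif_pos hex]
  obtain ⟨hk0, hkn, hkQ⟩ := Nat.find_spec hex
  have hklt : Nat.find hex < n := by
    have h1 : Nat.find hex ≤ cwd x a := Nat.find_min' hex (hvalid x hx hxa)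
    have := cwd_lt x a
    omega
  have hcwd : cwd (a - ((Nat.find hex : ℕ) : ZMod n)) a = Nat.find hex := cwd_sub_cast a _ hklt
  refine ⟨hkQ, ?_, ?_⟩
  · intro h
    rw [h] at hcwd; rw [cwd_self] at hcwd; omega
  · intro c hc hca
    rw [hcwd]
    exact Nat.find_min' hex (hvalid c hc hca)

lemma cprev_eq {Q : Finset (ZMod n)} {a b : ZMod n} (hb : b ∈ Q) (hba : b ≠ a)
    (hmin : ∀ c ∈ Q, c ≠ a → cwd b a ≤ cwd c a) : cprev n Q a = b := by
  obtain ⟨h1, h2, h3⟩ := cprev_spec hb hba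
  exact cwd_inj' (Nat.le_antisymm (h3 b hb hba) (hmin _ h1 h2))

/-- next of previous is the original -/
lemma cnext_cprev {Q : Finset (ZMod n)} {a x : ZMod n} (ha : a ∈ Q) (hx : x ∈ Q) (hxa : x ≠ a) :
    cnext n Q (cprev n Q a) = a := by
  obtain ⟨hp1, hp2, hp3⟩ := cprev_spec hx hxa
  set p := cprev n Q a with hp
  refine cnext_eq ha (Ne.symm hp2) ?_
  intro c hc hcp
  by_contra hlt
  push_neg at hlt
  have hca : c ≠ a := by
    intro h; rw [h] at hlt; omega
  have hc0 : 0 < cwd p c := by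
    rcases Nat.eq_zero_or_pos (cwd p c) with h|h
    · exact absurd (cwd_eq_zero_iff.1 h).symm hcp
    · exact h
  have hpa := hp3 c hc hca
  rcases cwd_add_cases p c a with h|h
  · have : cwd c a < cwd p a := by omega
    omega
  · have := cwd_lt c a
    have := cwd_lt p a
    omega

lemma cprev_cnext {Q : Finset (ZMod n)} {a x : ZMod n} (ha : a ∈ Q) (hx : x ∈ Q) (hxa : x ≠ a) :
    cprev n Q (cnext n Q a) = a := by
  obtain ⟨hp1, hp2, hp3⟩ := cnext_spec hx hxa
  set p := cnext n Q a with hp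
  refine cprev_eq ha (Ne.symm hp2) ?_
  intro c hc hcp
  by_contra hlt
  push_neg at hlt
  have hca : c ≠ a := by
    intro h; rw [h] at hlt; omega
  have hc0 : 0 < cwd c p := by
    rcases Nat.eq_zero_or_pos (cwd c p) with h|h
    · exact absurd (cwd_eq_zero_iff.1 h) hcp
    · exact h
  have hpa := hp3 c hc hca
  rcases cwd_add_cases a c p with h|h
  · have : cwd a c < cwd a p := by omega
    omega
  · have := cwd_lt a c
    have := cwd_lt a p
    omega

end CN
section Tri
variable {n : ℕ} [NeZero n]

lemma cwd_pos_of_ne {a b : ZMod n} (h : b ≠ a) : 0 < cwd a b := by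
  rcases Nat.eq_zero_or_pos (cwd a b) with h0|h0
  · exact absurd (cwd_eq_zero_iff.1 h0).symm h
  · exact h0

lemma ne_of_cwd_pos {a b : ZMod n} (h : 0 < cwd a b) : b ≠ a :=
  fun hh => by rw [hh, cwd_self] at h; omega

lemma tri_mem_cases {x y z c : ZMod n} (hc : c ∈ ({x, y, z} : Finset (ZMod n))) :
    c = x ∨ c = y ∨ c = z := by
  simpa using hc

lemma tri_facts {x y z : ZMod n} (h1 : 0 < cwd x y) (h2 : cwd x y < cwd x z) :
    cnext n {x,y,z} x = y ∧ cnext n {x,y,z} y = z ∧ cnext n {x,y,z} z = x ∧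
    cprev n {x,y,z} x = z ∧ cprev n {x,y,z} y = x ∧ cprev n {x,y,z} z = y := by
  have hxzlt := cwd_lt x z
  have hxylt := cwd_lt x y
  have hyx : y ≠ x := ne_of_cwd_pos h1
  have hzx : z ≠ x := ne_of_cwd_pos (by omega)
  have hzy : z ≠ y := fun h => by rw [h] at h2; omega
  have hyz : y ≠ z := hzy.symm
  have dyx : cwd y x = n - cwd x y := by have := cwd_rev hyx.symm; omega
  have dzx : cwd z x = n - cwd x z := by have := cwd_rev hzx.symm; omega
  have dyz : cwd y z = cwd x z - cwd x y := by
    rcases cwd_add_cases x y z with h|h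
    · omega
    · have := cwd_lt y z; omega
  have dzy : cwd z y = n - cwd x z + cwd x y := by
    have := cwd_rev hzy.symm
    omega
  have memx : x ∈ ({x,y,z} : Finset (ZMod n)) := by simp
  have memy : y ∈ ({x,y,z} : Finset (ZMod n)) := by simp
  have memz : z ∈ ({x,y,z} : Finset (ZMod n)) := by simp
  refine ⟨?_, ?_, ?_, ?_, ?_, ?_⟩
  · refine cnext_eq memy hyx ?_
    intro c hc hcx
    rcases tri_mem_cases hc with rfl|rfl|rfl
    · exact absurd rfl hcx
    · omega
    · omega
  · refine cnext_eq memz hzy ?_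
    intro c hc hcy
    rcases tri_mem_cases hc with rfl|rfl|rfl
    · omega
    · exact absurd rfl hcy
    · omega
  · refine cnext_eq memx hzx.symm ?_
    intro c hc hcz
    rcases tri_mem_cases hc with rfl|rfl|rfl
    · omega
    · omega
    · exact absurd rfl hcz
  · refine cprev_eq memz hzx ?_
    intro c hc hcx
    rcases tri_mem_cases hc with rfl|rfl|rfl
    · exact absurd rfl hcx
    · omega
    · omega
  · refine cprev_eq memx hyx.symm ?_
    intro c hc hcy
    rcases tri_mem_cases hc with rfl|rfl|rfl
    · omega
    · exact absurd rfl hcy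
    · omega
  · refine cprev_eq memy hyz ?_
    intro c hc hcz
    rcases tri_mem_cases hc with rfl|rfl|rfl
    · omega
    · omega
    · exact absurd rfl hcz

lemma tri_edges {x y z : ZMod n} (h1 : 0 < cwd x y) (h2 : cwd x y < cwd x z) :
    IsEdge n {x,y,z} x y ∧ IsEdge n {x,y,z} y z ∧ IsEdge n {x,y,z} z x := by
  obtain ⟨e1, e2, e3, _, _, _⟩ := tri_facts h1 h2
  have hxzlt := cwd_lt x z
  have hyx : y ≠ x := ne_of_cwd_pos h1
  have hzx : z ≠ x := ne_of_cwd_pos (by omega)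
  have hzy : z ≠ y := fun h => by rw [h] at h2; omega
  refine ⟨⟨by simp, by simp, hyx.symm, e1.symm⟩, ⟨by simp, by simp, hzy.symm, e2.symm⟩,
    ⟨by simp, by simp, hzx, e3.symm⟩⟩

lemma isEdge_tri_iff {x y z u v : ZMod n} (h1 : 0 < cwd x y) (h2 : cwd x y < cwd x z) :
    IsEdge n {x,y,z} u v ↔ (u = x ∧ v = y) ∨ (u = y ∧ v = z) ∨ (u = z ∧ v = x) := by
  obtain ⟨e1, e2, e3, _, _, _⟩ := tri_facts h1 h2
  constructor
  · rintro ⟨hu, hv, huv, rfl⟩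
    rcases tri_mem_cases hu with rfl|rfl|rfl
    · exact Or.inl ⟨rfl, e1⟩
    · exact Or.inr (Or.inl ⟨rfl, e2⟩)
    · exact Or.inr (Or.inr ⟨rfl, e3⟩)
  · obtain ⟨f1, f2, f3⟩ := tri_edges h1 h2
    rintro (⟨rfl, rfl⟩|⟨rfl, rfl⟩|⟨rfl, rfl⟩)
    · exact f1
    · exact f2
    · exact f3

lemma tri_of_card3 {Q : Finset (ZMod n)} (hQ : Q.card = 3) {a : ZMod n} (ha : a ∈ Q) :
    Q = {a, cnext n Q a, cprev n Q a} ∧ 0 < cwd a (cnext n Q a) ∧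
      cwd a (cnext n Q a) < cwd a (cprev n Q a) := by
  obtain ⟨x, hx, hxa⟩ := Finset.exists_mem_ne (s := Q) (by omega) a
  obtain ⟨hb1, hb2, hb3⟩ := cnext_spec hx hxa
  obtain ⟨hc1, hc2, hc3⟩ := cprev_spec hx hxa
  set b := cnext n Q a
  set c := cprev n Q a
  have hbc : b ≠ c := by
    intro h
    -- then Q ⊆ {a, b}
    have hsub : Q ⊆ {a, b} := by
      intro d hd
      simp only [Finset.mem_insert, Finset.mem_singleton]
      by_contra hcon
      push_neg at hcon
      obtain ⟨hda, hdb⟩ := hcon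
      have m1 := hb3 d hd hda
      have m2 := hc3 d hd hda
      rw [← h] at m2
      have hrb := cwd_rev (hb2 : b ≠ a)
      have hrd := cwd_rev (hda : d ≠ a)
      have : cwd a b = cwd a d := by omega
      exact hdb (cwd_inj this).symm
    have h1 := Finset.card_le_card hsub
    have h2 : ({a, b} : Finset (ZMod n)).card ≤ 2 := by
      apply le_trans (Finset.card_insert_le _ _)
      simp
    omega
  have hba : 0 < cwd a b := cwd_pos_of_ne hb2
  have hlt : cwd a b < cwd a c := by
    have m := hb3 c hc1 hc2
    rcases Nat.lt_or_ge (cwd a b) (cwd a c) with h|h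
    · exact h
    · have : cwd a b = cwd a c := by omega
      exact absurd (cwd_inj this) hbc
  refine ⟨?_, hba, hlt⟩
  have hsub : {a, b, c} ⊆ Q := by
    intro d hd
    rcases tri_mem_cases hd with rfl|rfl|rfl
    · exact ha
    · exact hb1
    · exact hc1
  have hcard : ({a, b, c} : Finset (ZMod n)).card = 3 :=
    Finset.card_eq_three.mpr ⟨a, b, c, fun h => hb2 h.symm, fun h => hc2 h.symm, hbc, rfl⟩
  exact (Finset.eq_of_subset_of_card_le hsub (by omega)).symm

end Tri
section Edge
variable {n : ℕ} [NeZero n]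

lemma cwd_succ (hn : 1 < n) (v : ZMod n) : cwd v (v + 1) = 1 := by
  have h : ((1:ℕ) : ZMod n) = (1 : ZMod n) := Nat.cast_one
  rw [← h]
  exact cwd_add_cast v 1 hn

lemma cwd_two (hn : 2 < n) (v : ZMod n) : cwd v (v + 2) = 2 := by
  have h : ((2:ℕ) : ZMod n) = (2 : ZMod n) := by norm_cast
  rw [← h]
  exact cwd_add_cast v 2 hn

/-- an edge `(u,v)` of a tile with at least 3 vertices can't have `u = v + 1`. -/
lemma edge_ne_succ (hn : 3 ≤ n) {Q : Finset (ZMod n)} (h3 : 3 ≤ Q.card) {u v : ZMod n}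
    (he : IsEdge n Q u v) : u ≠ v + 1 := by
  obtain ⟨hu, hv, huv, hcn⟩ := he
  intro hb
  obtain ⟨h1, h2, h3'⟩ := cnext_spec hv (Ne.symm huv)
  rw [← hcn] at h3'
  have hvu : cwd v u = 1 := by rw [hb]; exact cwd_succ (by omega) v
  have huvd : cwd u v = n - 1 := by have := cwd_rev huv; omega
  have hsub : Q ⊆ {u, v} := by
    intro c hc
    simp only [Finset.mem_insert, Finset.mem_singleton]
    by_contra hcon
    push_neg at hcon
    obtain ⟨hcu, hcv⟩ := hcon
    have := h3' c hc hcu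
    have hlt := cwd_lt u c
    have : cwd u c = cwd u v := by omega
    exact hcv (cwd_inj this)
  have hc1 := Finset.card_le_card hsub
  have hc2 : ({u, v} : Finset (ZMod n)).card ≤ 2 := by
    apply le_trans (Finset.card_insert_le _ _); simp
  omega

/-- a tile can't have both directed edges `(u,v)` and `(v,u)`. -/
lemma isEdge_asymm {Q : Finset (ZMod n)} (h3 : 3 ≤ Q.card) {u v : ZMod n}
    (he : IsEdge n Q u v) (he' : IsEdge n Q v u) : False := by
  obtain ⟨hu, hv, huv, hcn⟩ := he
  obtain ⟨_, _, hvu, hcn'⟩ := he'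
  obtain ⟨_, _, m1⟩ := cnext_spec hv (Ne.symm huv)
  obtain ⟨_, _, m2⟩ := cnext_spec hu huv
  rw [← hcn] at m1
  rw [← hcn'] at m2
  have hrev := cwd_rev huv
  have hsub : Q ⊆ {u, v} := by
    intro c hc
    simp only [Finset.mem_insert, Finset.mem_singleton]
    by_contra hcon
    push_neg at hcon
    obtain ⟨hcu, hcv⟩ := hcon
    have b1 := m1 c hc hcu
    have b2 := m2 c hc hcv
    have hlt := cwd_lt u c
    rcases cwd_add_cases u v c with h|h
    · omega
    · have := cwd_lt v c
      omega
  have hc1 := Finset.card_le_card hsub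
  have hc2 : ({u, v} : Finset (ZMod n)).card ≤ 2 := by
    apply le_trans (Finset.card_insert_le _ _); simp
  omega

/-- at most one tile has a given directed edge. -/
lemma edge_unique (hn : 3 ≤ n) (T : PolygonTiling n) {Q Q' : Finset (ZMod n)} {u v : ZMod n}
    (hQ : Q ∈ T.tiles) (hQ' : Q' ∈ T.tiles) (he : IsEdge n Q u v) (he' : IsEdge n Q' u v) :
    Q = Q' := by
  by_cases hb : v = u + 1
  · subst hb
    exact ExistsUnique.unique (T.boundary_edge u) ⟨hQ, he⟩ ⟨hQ', he'⟩
  · obtain ⟨S, ⟨hS, hSQ, hSe⟩, _⟩ := T.diag_shared Q hQ u v he hb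
    have hcond := edge_ne_succ hn (T.three_le Q hQ) he
    have h2 := T.diag_shared S hS v u hSe hcond
    have hQS : Q ≠ S := Ne.symm hSQ
    have hQ'S : Q' ≠ S := by
      intro h
      subst h
      exact isEdge_asymm (T.three_le Q' hQ') he' hSe
    exact ExistsUnique.unique h2 ⟨hQ, hQS, he⟩ ⟨hQ', hQ'S, he'⟩

lemma startTile_spec (T : PolygonTiling n) (x : ZMod n) :
    startTile n T x ∈ T.tiles ∧ IsEdge n (startTile n T x) x (x + 1) :=
  (Classical.choose_spec (T.boundary_edge x)).1

lemma tiles_card_pos (T : PolygonTiling n) : 0 < T.tiles.card :=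
  Finset.card_pos.mpr ⟨_, (startTile_spec T 0).1⟩

lemma scott_def (T : PolygonTiling n) (x : ZMod n) :
    scott n T x = scottRun n T T.tiles.card (startTile n T x, x) := rfl

end Edge
section Step
variable {n : ℕ} [NeZero n]

/-- all tiles containing `v` are triangles -/
def Fan (n : ℕ) [NeZero n] (T : PolygonTiling n) (v : ZMod n) : Prop :=
  ∀ Q ∈ T.tiles, v ∈ Q → Q.card = 3

lemma cwd_sub_coord {a x y : ZMod n} (h : cwd a x ≤ cwd a y) :
    cwd x y = cwd a y - cwd a x := by
  rcases cwd_add_cases a x y with h1|h1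
  · omega
  · have := cwd_lt x y; omega

lemma cwd_base_change {a p x : ZMod n} (hap : a ≠ p) (h : cwd a x < cwd a p) :
    cwd p x = n - cwd a p + cwd a x := by
  have hrev := cwd_rev hap
  rcases cwd_add_cases p a x with h1|h1
  · omega
  · have := cwd_lt p x; omega

lemma scottStep_term (T : PolygonTiling n) (s : Finset (ZMod n) × ZMod n)
    (h : cprev n s.1 s.2 = cprev n s.1 (cprev n s.1 s.2) + 1) :
    scottStep n T s = Sum.inr (cprev n s.1 s.2) := by
  simp only [scottStep]
  rw [if_pos h]

lemma scottStep_cont (T : PolygonTiling n) (s : Finset (ZMod n) × ZMod n)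
    (h : ¬ cprev n s.1 s.2 = cprev n s.1 (cprev n s.1 s.2) + 1)
    (hex : ∃ Q', Q' ∈ T.tiles ∧ Q' ≠ s.1 ∧ IsEdge n Q' (cprev n s.1 s.2) (cprev n s.1 (cprev n s.1 s.2))) :
    scottStep n T s = Sum.inl (Classical.choose hex, cprev n s.1 s.2) := by
  simp only [scottStep]
  rw [if_neg h, dif_pos hex]

lemma scottRun_succ_inr (T : PolygonTiling n) {s : Finset (ZMod n) × ZMod n} {y : ZMod n}
    (h : scottStep n T s = Sum.inr y) (k : ℕ) : scottRun n T (k+1) s = y := by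
  simp only [scottRun, h]

lemma scottRun_succ_inl (T : PolygonTiling n) {s s' : Finset (ZMod n) × ZMod n}
    (h : scottStep n T s = Sum.inl s') (k : ℕ) : scottRun n T (k+1) s = scottRun n T k s' := by
  simp only [scottRun, h]

/-- entering a tile across edge `(p, pp)` with `w` strictly beyond: the new tile misses `w`
and `p` is the last vertex of the new tile before `w`. -/
lemma sep_entry {Q' : Finset (ZMod n)} {p pp w : ZMod n} (h3 : 3 ≤ Q'.card)
    (he : IsEdge n Q' p pp) (hw : cwd p w < cwd p pp) (hwp : w ≠ p) :
    w ∉ Q' ∧ cprev n Q' w = p := by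
  obtain ⟨hp, hpp, hppne, hcn⟩ := he
  obtain ⟨_, _, hmin⟩ := cnext_spec hpp (Ne.symm hppne)
  rw [← hcn] at hmin
  have hwQ : w ∉ Q' := by
    intro hwQ
    have := hmin w hwQ hwp
    omega
  refine ⟨hwQ, ?_⟩
  refine cprev_eq hp (fun h => hwp h.symm) ?_
  intro c hc hcw
  by_cases hcp : c = p
  · subst hcp; omega
  · have hgc := hmin c hc hcp
    have h1 := cwd_lt p c
    rcases cwd_add_cases p c w with h2|h2
    · omega
    · omega

/-- facts about a fan state `(Q, a)` with apex `w`. -/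
lemma fan_state_facts (hn : 3 ≤ n) {Q : Finset (ZMod n)} {a w : ZMod n}
    (h3 : 3 ≤ Q.card) (he : IsEdge n Q a w) :
    cprev n Q a ∈ Q ∧ cprev n Q a ≠ a ∧ cprev n Q a ≠ w ∧
    cprev n Q (cprev n Q a) ∈ Q ∧ cprev n Q (cprev n Q a) ≠ cprev n Q a ∧
    cprev n Q (cprev n Q a) ≠ a ∧
    0 < cwd a w ∧ cwd a w ≤ cwd a (cprev n Q (cprev n Q a)) ∧
    cwd a (cprev n Q (cprev n Q a)) < cwd a (cprev n Q a) ∧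
    (Q.card = 3 → cprev n Q (cprev n Q a) = w) ∧
    (4 ≤ Q.card → cprev n Q (cprev n Q a) ≠ w) ∧
    (∀ c ∈ Q, c ≠ a → cwd a w ≤ cwd a c ∧ cwd a c ≤ cwd a (cprev n Q a)) := by
  obtain ⟨ha, hwQ, haw, hcn⟩ := he
  obtain ⟨_, _, hminN⟩ := cnext_spec hwQ (Ne.symm haw)
  rw [← hcn] at hminN
  set p := cprev n Q a with hp
  obtain ⟨hpQ, hpa, hminP⟩ := cprev_spec hwQ (Ne.symm haw)
  rw [← hp] at hpQ hpa hminP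
  -- basic coordinate bounds: for c ∈ Q, c ≠ a : cwd a w ≤ cwd a c ≤ cwd a p
  have hbound : ∀ c ∈ Q, c ≠ a → cwd a w ≤ cwd a c ∧ cwd a c ≤ cwd a p := by
    intro c hc hca
    refine ⟨hminN c hc hca, ?_⟩
    have h1 := hminP c hc hca
    have h2 := cwd_rev hca
    have h3 := cwd_rev hpa
    omega
  have haw0 : 0 < cwd a w := cwd_pos_of_ne haw.symm
  have hpw : p ≠ w ∨ Q ⊆ {a, w} := by
    by_cases hpw : p = w
    · right
      intro c hc
      simp only [Finset.mem_insert, Finset.mem_singleton]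
      by_cases hca : c = a
      · exact Or.inl hca
      · right
        obtain ⟨b1, b2⟩ := hbound c hc hca
        rw [hpw] at b2
        exact cwd_inj (a := a) (by omega)
    · left; exact hpw
  have hpw : p ≠ w := by
    rcases hpw with h|h
    · exact h
    · exfalso
      have hc1 := Finset.card_le_card h
      have hc2 : ({a, w} : Finset (ZMod n)).card ≤ 2 := by
        apply le_trans (Finset.card_insert_le _ _); simp
      omega
  have hwp_lt : cwd a w < cwd a p := by
    obtain ⟨b1, b2⟩ := hbound p hpQ hpa
    rcases Nat.lt_or_ge (cwd a w) (cwd a p) with h|h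
    · exact h
    · exact absurd (cwd_inj (a := a) (by omega)) hpw
  set pp := cprev n Q p with hpp
  obtain ⟨hppQ, hppp, hminPP⟩ := cprev_spec ha hpa.symm
  rw [← hpp] at hppQ hppp hminPP
  -- pp ≠ a : the minimizer of cwd · p is not a since w is closer
  have hppa : pp ≠ a := by
    intro h
    have hm := hminPP w hwQ hpw.symm
    rw [h] at hm
    have e1 : cwd w p = cwd a p - cwd a w := cwd_sub_coord (le_of_lt hwp_lt)
    have e2 : cwd a p < n := cwd_lt a p
    omega
  obtain ⟨c1, c2⟩ := hbound pp hppQ hppa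
  have hpp_lt : cwd a pp < cwd a p := by
    rcases Nat.lt_or_ge (cwd a pp) (cwd a p) with h|h
    · exact h
    · exact absurd (cwd_inj (a := a) (by omega)) hppp
  have hcard3 : Q.card = 3 → pp = w := by
    intro hc3
    obtain ⟨hQeq, _, _⟩ := tri_of_card3 hc3 ha
    rw [← hcn, ← hp] at hQeq
    have : pp ∈ ({a, w, p} : Finset (ZMod n)) := by rw [← hQeq]; exact hppQ
    rcases tri_mem_cases this with h|h|h
    · exact absurd h hppa
    · exact h
    · exact absurd h hppp
  have hcard4 : 4 ≤ Q.card → pp ≠ w := by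
    intro hc4 hppw
    have hsub : Q ⊆ {a, w, p} := by
      intro c hc
      simp only [Finset.mem_insert, Finset.mem_singleton]
      by_cases hca : c = a
      · exact Or.inl hca
      by_cases hcp : c = p
      · exact Or.inr (Or.inr hcp)
      obtain ⟨b1, b2⟩ := hbound c hc hca
      have hm := hminPP c hc hcp
      rw [hppw] at hm
      have e1 : cwd w p = cwd a p - cwd a w := cwd_sub_coord (le_of_lt hwp_lt)
      have e2 : cwd c p = cwd a p - cwd a c := cwd_sub_coord b2
      have : cwd a c = cwd a w := by omega
      exact Or.inr (Or.inl (cwd_inj this))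
    have hc1 := Finset.card_le_card hsub
    have hc2 : ({a, w, p} : Finset (ZMod n)).card ≤ 3 := by
      apply le_trans (Finset.card_insert_le _ _)
      have : ({w, p} : Finset (ZMod n)).card ≤ 2 := by
        apply le_trans (Finset.card_insert_le _ _); simp
      omega
    omega
  exact ⟨hpQ, hpa, hpw, hppQ, hppp, hppa, haw0, c1, hpp_lt, hcard3, hcard4, hbound⟩

end Step
section SepRun
variable {n : ℕ} [NeZero n]

/-- the "gap" of a tile not containing `w`: length of the arc of its entry edge facing `w`. -/
noncomputable def sgap (n : ℕ) [NeZero n] (w : ZMod n) (R : Finset (ZMod n)) : ℕ :=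
  cwd (cprev n R w) (cnext n R (cprev n R w))

lemma sep_run (hn : 3 ≤ n) (T : PolygonTiling n) (w : ZMod n) :
    ∀ k : ℕ, ∀ Q : Finset (ZMod n), ∀ a : ZMod n,
      Q ∈ T.tiles → w ∉ Q → a = cprev n Q w → n - sgap n w Q ≤ k →
      ∃ (F : Finset (Finset (ZMod n))) (y : ZMod n),
        F ⊆ T.tiles ∧ Q ∈ F ∧ (∀ R ∈ F, w ∉ R) ∧
        (∀ R ∈ F, sgap n w Q ≤ sgap n w R) ∧ y ≠ w + 1 ∧
        (∀ fuel : ℕ, F.card ≤ fuel → scottRun n T fuel (Q, a) = y) := by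
  intro k
  induction k with
  | zero =>
    intro Q a hQ hw ha hk
    exfalso
    have := cwd_lt (cprev n Q w) (cnext n Q (cprev n Q w))
    unfold sgap at hk
    omega
  | succ k ih =>
    intro Q a hQ hw ha hk
    have h3 := T.three_le Q hQ
    have haQ : a ∈ Q := by
      rw [ha]
      obtain ⟨x, hx⟩ := Finset.card_pos.mp (by omega : 0 < Q.card)
      exact (cprev_spec hx (fun h => hw (by rw [← h]; exact hx))).1
    have haw : a ≠ w := fun h => hw (h ▸ haQ)
    -- minimality of a = cprev Q w
    have hminA : ∀ c ∈ Q, cwd a w ≤ cwd c w := by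
      intro c hc
      have := (cprev_spec haQ haw).2.2 c hc (fun h => hw (h ▸ hc))
      rw [← ha] at this
      exact this
    obtain ⟨x, hx, hxa⟩ := Finset.exists_mem_ne (s := Q) (by omega) a
    obtain ⟨hbQ, hba, hminB⟩ := cnext_spec hx hxa
    set b := cnext n Q a with hbdef
    obtain ⟨hpQ, hpa, hminP⟩ := cprev_spec hx hxa
    set p := cprev n Q a with hpdef
    have hC1 : cwd a w < cwd a b := by
      by_contra hle
      push_neg at hle
      have hbw : b ≠ w := fun h => hw (h ▸ hbQ)
      have e1 : cwd b w = cwd a w - cwd a b := cwd_sub_coord hle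
      have := hminA b hbQ
      have hb0 : 0 < cwd a b := cwd_pos_of_ne hba
      have : cwd a w = 0 := by omega
      exact haw (cwd_eq_zero_iff.1 this)
    have hbound : ∀ c ∈ Q, c ≠ a → cwd a b ≤ cwd a c ∧ cwd a c ≤ cwd a p := by
      intro c hc hca
      refine ⟨hminB c hc hca, ?_⟩
      have h1 := hminP c hc hca
      have h2 := cwd_rev hca
      have h3 := cwd_rev hpa
      omega
    obtain ⟨hppQ, hppp, hminPP⟩ := cprev_spec haQ (Ne.symm hpa)
    set pp := cprev n Q p with hppdef
    have hppa : pp ≠ a := by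
      intro h
      have hns : ¬ Q ⊆ {a, p} := by
        intro hsub
        have h1 := Finset.card_le_card hsub
        have h2 : ({a, p} : Finset (ZMod n)).card ≤ 2 := by
          apply le_trans (Finset.card_insert_le _ _); simp
        omega
      obtain ⟨c, hc, hcab⟩ := Finset.not_subset.1 hns
      simp only [Finset.mem_insert, Finset.mem_singleton] at hcab
      push_neg at hcab
      obtain ⟨hca, hcp⟩ := hcab
      have hm := hminPP c hc hcp
      rw [h] at hm
      obtain ⟨b1, b2⟩ := hbound c hc hca
      have e2 : cwd c p = cwd a p - cwd a c := cwd_sub_coord b2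
      have hc0 : 0 < cwd a c := cwd_pos_of_ne hca
      have hap := cwd_lt a p
      omega
    obtain ⟨d1, d2⟩ := hbound pp hppQ hppa
    have hpp_lt : cwd a pp < cwd a p := by
      rcases Nat.lt_or_ge (cwd a pp) (cwd a p) with h|h
      · exact h
      · exact absurd (cwd_inj (a := a) (by omega)) hppp
    have hgapQ : sgap n w Q = cwd a b := by
      rw [sgap, ← ha, ← hbdef]
    by_cases hterm : p = pp + 1
    · -- strand terminates here
      have hstep : scottStep n T (Q, a) = Sum.inr p := by
        apply scottStep_term
        rw [← hpdef, ← hppdef]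
        exact hterm
      refine ⟨{Q}, p, by simpa using hQ, Finset.mem_singleton_self Q, ?_, ?_, ?_, ?_⟩
      · intro R hR; rw [Finset.mem_singleton] at hR; subst hR; exact hw
      · intro R hR; rw [Finset.mem_singleton] at hR; subst hR; exact le_refl _
      · intro hcon
        rw [hcon] at hterm
        have : w = pp := by
          have := add_right_cancel ((hterm.symm) : pp + 1 = w + 1)
          exact this.symm
        exact hw (this ▸ hppQ)
      · intro fuel hfuel
        rw [Finset.card_singleton] at hfuel
        rcases fuel with _|f
        · omega
        · exact scottRun_succ_inr T hstep f
    · -- strand continues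
      have hedge : IsEdge n Q pp p :=
        ⟨hppQ, hpQ, hppp, (cnext_cprev hpQ haQ (Ne.symm hpa)).symm⟩
      have hex : ∃ Q', Q' ∈ T.tiles ∧ Q' ≠ Q ∧ IsEdge n Q' p pp := by
        obtain ⟨S, hS, _⟩ := T.diag_shared Q hQ pp p hedge (fun h => hterm h)
        exact ⟨S, hS⟩
      have hstep : scottStep n T (Q, a) = Sum.inl (Classical.choose hex, p) := by
        apply scottStep_cont
        · rw [← hpdef, ← hppdef]; exact hterm
      obtain ⟨hQ'mem, hQ'ne, hQ'edge⟩ := Classical.choose_spec hex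
      set Q' := Classical.choose hex with hQ'def
      have h3' := T.three_le Q' hQ'mem
      have hwp : w ≠ p := fun h => hw (h ▸ hpQ)
      have hbase1 : cwd p w = n - cwd a p + cwd a w :=
        cwd_base_change (Ne.symm hpa) (by omega)
      have hbase2 : cwd p pp = n - cwd a p + cwd a pp :=
        cwd_base_change (Ne.symm hpa) hpp_lt
      have hwlt : cwd p w < cwd p pp := by omega
      obtain ⟨hwQ', hcpv⟩ := sep_entry h3' hQ'edge hwlt hwp
      have hgapQ' : sgap n w Q' = cwd p pp := by
        rw [sgap, hcpv, ← hQ'edge.2.2.2]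
      have hgaplt : sgap n w Q < sgap n w Q' := by
        rw [hgapQ, hgapQ']
        have := cwd_lt a p
        omega
      obtain ⟨F', y, hF'sub, hQ'F', hF'w, hF'gap, hy, hrun⟩ :=
        ih Q' p hQ'mem hwQ' hcpv.symm (by omega)
      have hQF' : Q ∉ F' := by
        intro hmem
        have := hF'gap Q hmem
        omega
      refine ⟨insert Q F', y, ?_, Finset.mem_insert_self _ _, ?_, ?_, hy, ?_⟩
      · intro R hR
        rcases Finset.mem_insert.1 hR with rfl|hR
        · exact hQ
        · exact hF'sub hR
      · intro R hR
        rcases Finset.mem_insert.1 hR with rfl|hR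
        · exact hw
        · exact hF'w R hR
      · intro R hR
        rcases Finset.mem_insert.1 hR with rfl|hR
        · exact le_refl _
        · exact le_trans (le_of_lt hgaplt) (hF'gap R hR)
      · intro fuel hfuel
        rw [Finset.card_insert_of_notMem hQF'] at hfuel
        rcases fuel with _|f
        · omega
        · rw [scottRun_succ_inl T hstep f]
          exact hrun f (by omega)

end SepRun
section FanRun
variable {n : ℕ} [NeZero n]

lemma fan_run (hn : 3 ≤ n) (T : PolygonTiling n) (w : ZMod n) :
    ∀ k : ℕ, ∀ Q : Finset (ZMod n), ∀ a : ZMod n,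
      Q ∈ T.tiles → IsEdge n Q a w → cwd w a ≤ k →
      ∃ (F : Finset (Finset (ZMod n))) (y : ZMod n),
        F ⊆ T.tiles ∧ Q ∈ F ∧
        (∀ R ∈ F, w ∈ R → cwd w (cprev n R w) ≤ cwd w a) ∧
        (∀ fuel : ℕ, F.card ≤ fuel → scottRun n T fuel (Q, a) = y) ∧
        ((∀ R ∈ F, w ∈ R → R.card = 3) → y = w + 1) ∧
        (y = w + 1 →
          (∀ R ∈ F, w ∈ R ∧ R.card = 3) ∧
          (∃ R ∈ F, cnext n R w = w + 1) ∧
          (∀ S ∈ F, cprev n S w = a ∨ ∃ R ∈ F, cnext n R w = cprev n S w)) := by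
  intro k
  induction k with
  | zero =>
    intro Q a hQ he hk
    exfalso
    have : a ≠ w := he.2.2.1
    have := cwd_pos_of_ne this
    omega
  | succ k ih =>
    intro Q a hQ he hk
    have h3 := T.three_le Q hQ
    obtain ⟨hpQ, hpa, hpw, hppQ, hppp, hppa, haw0, hwpp, hpplt, hc3, hc4, hbound⟩ :=
      fan_state_facts hn h3 he
    obtain ⟨haQ, hwQ, haw, hcnw⟩ := he
    set p := cprev n Q a with hpdef
    set pp := cprev n Q p with hppdef
    have hcpa : cprev n Q w = a := by rw [hcnw]; exact cprev_cnext haQ hwQ (Ne.symm haw)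
    -- μ decrease: cwd w p < cwd w a
    have hwa : cwd w a = n - cwd a w := by have := cwd_rev haw; omega
    have hawp := (hbound p hpQ hpa).2
    have hawplt : cwd a w < cwd a p := by
      rcases Nat.lt_or_ge (cwd a w) (cwd a p) with h|h
      · exact h
      · exact absurd (cwd_inj (a := a) (by omega)) hpw
    have hwp : cwd w p = cwd a p - cwd a w := cwd_sub_coord (le_of_lt hawplt)
    have hmu : cwd w p < cwd w a := by
      have := cwd_lt a p
      omega
    by_cases hcard : Q.card = 3
    · -- triangle tile: stay in the fan
      have hppw : pp = w := hc3 hcard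
      obtain ⟨hQeq, ht1, ht2⟩ := tri_of_card3 hcard haQ
      rw [← hcnw, ← hpdef] at hQeq
      rw [← hcnw] at ht1 ht2
      rw [← hpdef] at ht2
      obtain ⟨e1, e2, e3, f1, f2, f3⟩ := tri_facts ht1 ht2
      rw [← hQeq] at e1 e2 e3 f1 f2 f3
      by_cases hpw1 : p = w + 1
      · -- strand terminates at w+1
        have hstep : scottStep n T (Q, a) = Sum.inr p := by
          apply scottStep_term
          rw [← hpdef, ← hppdef, hppw]
          exact hpw1
        refine ⟨{Q}, p, by simpa using hQ, Finset.mem_singleton_self Q, ?_, ?_, ?_, ?_⟩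
        · intro R hR _
          rw [Finset.mem_singleton] at hR; subst hR
          rw [hcpa]
        · intro fuel hfuel
          rw [Finset.card_singleton] at hfuel
          rcases fuel with _|f
          · omega
          · exact scottRun_succ_inr T hstep f
        · intro _; exact hpw1
        · intro _
          refine ⟨?_, ⟨Q, Finset.mem_singleton_self Q, by rw [e2, hpw1]⟩, ?_⟩
          · intro R hR
            rw [Finset.mem_singleton] at hR; subst hR
            exact ⟨hwQ, hcard⟩
          · intro S hS
            rw [Finset.mem_singleton] at hS; subst hS
            exact Or.inl hcpa
      · -- strand continues to the next fan tile
        have hterm : ¬ p = pp + 1 := by rw [hppw]; exact hpw1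
        have hedge : IsEdge n Q w p := ⟨hwQ, hpQ, Ne.symm hpw, e2.symm⟩
        have hex : ∃ Q', Q' ∈ T.tiles ∧ Q' ≠ Q ∧ IsEdge n Q' p pp := by
          obtain ⟨S, hS, _⟩ := T.diag_shared Q hQ w p hedge hpw1
          rw [← hppw] at hS
          exact ⟨S, hS⟩
        have hstep : scottStep n T (Q, a) = Sum.inl (Classical.choose hex, p) := by
          apply scottStep_cont
          rw [← hpdef, ← hppdef]; exact hterm
        obtain ⟨hQ'mem, hQ'ne, hQ'edge⟩ := Classical.choose_spec hex
        set Q' := Classical.choose hex with hQ'def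
        rw [hppw] at hQ'edge
        obtain ⟨F', y, hF'sub, hQ'F', hF'pred, hrun, hfan5, hfan6⟩ :=
          ih Q' p hQ'mem hQ'edge (by omega)
        have hQF' : Q ∉ F' := by
          intro hmem
          have := hF'pred Q hmem hwQ
          rw [hcpa] at this
          omega
        refine ⟨insert Q F', y, ?_, Finset.mem_insert_self _ _, ?_, ?_, ?_, ?_⟩
        · intro R hR
          rcases Finset.mem_insert.1 hR with rfl|hR
          · exact hQ
          · exact hF'sub hR
        · intro R hR hwR
          rcases Finset.mem_insert.1 hR with rfl|hR
          · rw [hcpa]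
          · exact le_trans (hF'pred R hR hwR) (le_of_lt hmu)
        · intro fuel hfuel
          rw [Finset.card_insert_of_notMem hQF'] at hfuel
          rcases fuel with _|f
          · omega
          · rw [scottRun_succ_inl T hstep f]
            exact hrun f (by omega)
        · intro htri
          exact hfan5 (fun R hR hwR => htri R (Finset.mem_insert_of_mem hR) hwR)
        · intro hy
          obtain ⟨P1, ⟨R0, hR0, hR0e⟩, P3⟩ := hfan6 hy
          refine ⟨?_, ⟨R0, Finset.mem_insert_of_mem hR0, hR0e⟩, ?_⟩
          · intro R hR
            rcases Finset.mem_insert.1 hR with rfl|hR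
            · exact ⟨hwQ, hcard⟩
            · exact P1 R hR
          · intro S hS
            rcases Finset.mem_insert.1 hS with rfl|hS
            · exact Or.inl hcpa
            · rcases P3 S hS with h|⟨R, hR, hRe⟩
              · exact Or.inr ⟨Q, Finset.mem_insert_self _ _, by rw [e2, h]⟩
              · exact Or.inr ⟨R, Finset.mem_insert_of_mem hR, hRe⟩
    · -- big tile: strand leaves the fan
      have hppw : pp ≠ w := hc4 (by omega)
      have hawpp : cwd a w < cwd a pp := by
        rcases Nat.lt_or_ge (cwd a w) (cwd a pp) with h|h
        · exact h
        · exact absurd (cwd_inj (a := a) (by omega)) hppw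
      by_cases hterm : p = pp + 1
      · -- terminates, not at w+1
        have hstep : scottStep n T (Q, a) = Sum.inr p := by
          apply scottStep_term
          rw [← hpdef, ← hppdef]; exact hterm
        have hyne : p ≠ w + 1 := by
          intro h
          rw [h] at hterm
          have : w = pp := (add_right_cancel (hterm.symm : pp + 1 = w + 1)).symm
          exact hppw this.symm
        refine ⟨{Q}, p, by simpa using hQ, Finset.mem_singleton_self Q, ?_, ?_, ?_, ?_⟩
        · intro R hR _
          rw [Finset.mem_singleton] at hR; subst hR
          rw [hcpa]
        · intro fuel hfuel
          rw [Finset.card_singleton] at hfuel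
          rcases fuel with _|f
          · omega
          · exact scottRun_succ_inr T hstep f
        · intro htri
          exact absurd (htri Q (Finset.mem_singleton_self Q) hwQ) hcard
        · intro hy
          exact absurd hy hyne
      · -- continues into a separated tile
        have hedge : IsEdge n Q pp p :=
          ⟨hppQ, hpQ, hppp, (cnext_cprev hpQ haQ (Ne.symm hpa)).symm⟩
        have hex : ∃ Q', Q' ∈ T.tiles ∧ Q' ≠ Q ∧ IsEdge n Q' p pp := by
          obtain ⟨S, hS, _⟩ := T.diag_shared Q hQ pp p hedge (fun h => hterm h)
          exact ⟨S, hS⟩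
        have hstep : scottStep n T (Q, a) = Sum.inl (Classical.choose hex, p) := by
          apply scottStep_cont
          rw [← hpdef, ← hppdef]; exact hterm
        obtain ⟨hQ'mem, hQ'ne, hQ'edge⟩ := Classical.choose_spec hex
        set Q' := Classical.choose hex with hQ'def
        have h3' := T.three_le Q' hQ'mem
        have hbase1 : cwd p w = n - cwd a p + cwd a w :=
          cwd_base_change (Ne.symm hpa) hawplt
        have hbase2 : cwd p pp = n - cwd a p + cwd a pp :=
          cwd_base_change (Ne.symm hpa) hpplt
        have hwlt : cwd p w < cwd p pp := by omega
        have hwnep : w ≠ p := Ne.symm hpw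
        obtain ⟨hwQ', hcpv⟩ := sep_entry h3' hQ'edge hwlt hwnep
        obtain ⟨F', y, hF'sub, hQ'F', hF'w, hF'gap, hyne, hrun⟩ :=
          sep_run hn T w (n - sgap n w Q') Q' p hQ'mem hwQ' hcpv.symm (le_refl _)
        have hQF' : Q ∉ F' := fun hmem => (hF'w Q hmem) hwQ
        refine ⟨insert Q F', y, ?_, Finset.mem_insert_self _ _, ?_, ?_, ?_, ?_⟩
        · intro R hR
          rcases Finset.mem_insert.1 hR with rfl|hR
          · exact hQ
          · exact hF'sub hR
        · intro R hR hwR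
          rcases Finset.mem_insert.1 hR with rfl|hR
          · rw [hcpa]
          · exact absurd hwR (hF'w R hR)
        · intro fuel hfuel
          rw [Finset.card_insert_of_notMem hQF'] at hfuel
          rcases fuel with _|f
          · omega
          · rw [scottRun_succ_inl T hstep f]
            exact hrun f (by omega)
        · intro htri
          exact absurd (htri Q (Finset.mem_insert_self _ _) hwQ) hcard
        · intro hy
          exact absurd hy hyne

end FanRun
section ScottFan
variable {n : ℕ} [NeZero n]

lemma self_ne_add_one (hn : 3 ≤ n) (w : ZMod n) : w ≠ w + 1 := by
  intro h
  have h1 : cwd w (w + 1) = 1 := cwd_succ (by omega) w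
  rw [← h, cwd_self] at h1
  omega

/-- tiles `R ∋ w` with the canonical edge `(w, cnext R w)`. -/
lemma succ_edge {R : Finset (ZMod n)} (h3 : 3 ≤ R.card) (hwR : w ∈ R) :
    IsEdge n R w (cnext n R w) := by
  obtain ⟨x, hx, hxw⟩ := Finset.exists_mem_ne (s := R) (by omega) w
  obtain ⟨h1, h2, _⟩ := cnext_spec hx hxw
  exact ⟨hwR, h1, Ne.symm h2, rfl⟩

/-- every tile containing `w` is in the visited chain `F`. -/
lemma fan_of_chain (hn : 3 ≤ n) (T : PolygonTiling n) (w a₀ : ZMod n) (hw : w = a₀ + 1)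
    (F : Finset (Finset (ZMod n))) (hF : F ⊆ T.tiles)
    (P1 : ∀ R ∈ F, w ∈ R ∧ R.card = 3)
    (P2 : ∃ R ∈ F, cnext n R w = w + 1)
    (P3 : ∀ S ∈ F, cprev n S w = a₀ ∨ ∃ R ∈ F, cnext n R w = cprev n S w) :
    ∀ B ∈ T.tiles, w ∈ B → B ∈ F := by
  suffices h : ∀ m : ℕ, ∀ B ∈ T.tiles, w ∈ B → cwd w (cnext n B w) ≤ m → B ∈ F by
    intro B hB hwB
    exact h (cwd w (cnext n B w)) B hB hwB (le_refl _)
  intro m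
  induction m with
  | zero =>
    intro B hB hwB hle
    exfalso
    have he := succ_edge (T.three_le B hB) hwB
    have := cwd_pos_of_ne (Ne.symm he.2.2.1)
    omega
  | succ m ih =>
    intro B hB hwB hle
    by_contra hBF
    have h3B := T.three_le B hB
    have he : IsEdge n B w (cnext n B w) := succ_edge h3B hwB
    set s := cnext n B w with hsdef
    have hsw : w ≠ s := he.2.2.1
    -- s ≠ w + 1
    have hs1 : s ≠ w + 1 := by
      intro hcon
      obtain ⟨R0, hR0F, hR0e⟩ := P2
      have hR0tiles := hF hR0F
      have he0 : IsEdge n R0 w (cnext n R0 w) := succ_edge (T.three_le R0 hR0tiles) (P1 R0 hR0F).1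
      rw [hR0e] at he0
      rw [hcon] at he
      exact hBF ((edge_unique hn T hB hR0tiles he he0) ▸ hR0F)
    -- cross the diagonal (w, s)
    obtain ⟨S, ⟨hStiles, hSB, hSe⟩, _⟩ := T.diag_shared B hB w s he hs1
    have hwS : w ∈ S := hSe.2.1
    have hcpS : cprev n S w = s := by
      have := cprev_cnext hSe.1 hwS hsw
      rw [← hSe.2.2.2] at this
      exact this
    have hSF : S ∉ F := by
      intro hSF
      rcases P3 S hSF with h|⟨R, hRF, hRe⟩
      · rw [hcpS] at h
        subst h
        exact (edge_ne_succ hn h3B he) hw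
      · rw [hcpS] at hRe
        have hRtiles := hF hRF
        have heR : IsEdge n R w (cnext n R w) := succ_edge (T.three_le R hRtiles) (P1 R hRF).1
        rw [hRe] at heR
        exact hBF ((edge_unique hn T hB hRtiles he heR) ▸ hRF)
    -- μ decreases
    have h3S := T.three_le S hStiles
    have heS : IsEdge n S w (cnext n S w) := succ_edge h3S hwS
    have hmin : cwd w (cnext n S w) ≤ cwd w s := by
      obtain ⟨x, hx, hxw⟩ := Finset.exists_mem_ne (s := S) (by omega) w
      exact (cnext_spec hx hxw).2.2 s hSe.1 (Ne.symm hsw)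
    have hne : cnext n S w ≠ s := by
      intro hcon
      rw [← hcon] at hSe
      exact isEdge_asymm h3S heS hSe
    have hlt : cwd w (cnext n S w) < cwd w s := by
      rcases Nat.lt_or_ge (cwd w (cnext n S w)) (cwd w s) with h|h
      · exact h
      · exact absurd (cwd_inj (a := w) (by omega)) hne
    exact hSF (ih S hStiles hwS (by omega))

lemma scott_eq_iff_fan (hn : 3 ≤ n) (T : PolygonTiling n) (i : ZMod n) :
    scott n T i = i + 2 ↔ Fan n T (i + 1) := by
  have hw2 : i + 2 = (i + 1) + 1 := by ring
  obtain ⟨hQ0, he0⟩ := startTile_spec T i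
  obtain ⟨F, y, hFsub, hQ0F, hFpred, hrun, h5, h6⟩ :=
    fan_run hn T (i + 1) (cwd (i + 1) i) _ i hQ0 he0 (le_refl _)
  have hscott : scott n T i = y := by
    rw [scott_def]
    exact hrun _ (Finset.card_le_card hFsub)
  constructor
  · intro h
    have hy : y = (i + 1) + 1 := by rw [← hscott, h, hw2]
    obtain ⟨P1, P2, P3⟩ := h6 hy
    have hall := fan_of_chain hn T (i + 1) i rfl F hFsub P1 P2 P3
    intro R hR hwR
    exact (P1 R (hall R hR hwR)).2
  · intro hfan
    rw [hscott, hw2]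
    exact h5 (fun R hR hwR => hfan R (hFsub hR) hwR)

end ScottFan
section Ear
variable {n : ℕ} [NeZero n]

lemma ear_pos (hn : 3 ≤ n) (i : ZMod n) :
    0 < cwd i (i + 1) ∧ cwd i (i + 1) < cwd i (i + 2) := by
  have h1 : cwd i (i + 1) = 1 := cwd_succ (by omega) i
  have h2 : cwd i (i + 2) = 2 := cwd_two (by omega) i
  omega

lemma ear_card (hn : 3 ≤ n) (i : ZMod n) : ({i, i + 1, i + 2} : Finset (ZMod n)).card = 3 := by
  obtain ⟨h1, h2⟩ := ear_pos hn i
  have := cwd_lt i (i + 2)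
  refine Finset.card_eq_three.mpr ⟨i, i + 1, i + 2, ?_, ?_, ?_, rfl⟩
  · exact (ne_of_cwd_pos h1).symm
  · intro h
    have h0 : cwd i (i + 2) = 0 := by rw [← h]; exact cwd_self i
    omega
  · intro h; rw [h] at h2; omega

lemma fan_of_ear (hn : 3 ≤ n) (T : PolygonTiling n) (i : ZMod n)
    (hE : ({i, i + 1, i + 2} : Finset (ZMod n)) ∈ T.tiles) : Fan n T (i + 1) := by
  obtain ⟨hp1, hp2⟩ := ear_pos hn i
  have hEcard := ear_card hn i
  intro R hR hwR
  -- it suffices to show R is the ear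
  suffices hRE : R = {i, i + 1, i + 2} by rw [hRE]; exact hEcard
  by_contra hne
  have h3R := T.three_le R hR
  obtain ⟨e1, e2, e3⟩ := tri_edges hp1 hp2
  by_cases hn3 : n = 3
  · -- R ⊆ {i, i+1, i+2} = everything
    have hsub : R ⊆ {i, i + 1, i + 2} := by
      intro x hx
      simp only [Finset.mem_insert, Finset.mem_singleton]
      have hx1 := cwd_lt i x
      rcases (by omega : cwd i x = 0 ∨ cwd i x = 1 ∨ cwd i x = 2) with h|h|h
      · exact Or.inl (cwd_eq_zero_iff.1 h).symm
      · refine Or.inr (Or.inl ?_)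
        have : cwd i (i+1) = 1 := cwd_succ (by omega) i
        exact cwd_inj (a := i) (by omega)
      · refine Or.inr (Or.inr ?_)
        have : cwd i (i+2) = 2 := cwd_two (by omega) i
        exact cwd_inj (a := i) (by omega)
    exact hne (Finset.eq_of_subset_of_card_le hsub (by omega))
  · -- n ≥ 4 : produce a crossing
    have he : IsEdge n R (i + 1) (cnext n R (i + 1)) := succ_edge h3R hwR
    set dv := cnext n R (i + 1) with hdv
    have hdv1 : dv ≠ i + 1 := Ne.symm he.2.2.1
    have hdv2 : dv ≠ i + 2 := by
      intro h
      rw [h] at he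
      · exact hne (edge_unique hn T hR hE he (by rw [show i + 2 = (i+1)+1 by ring] at e2 ⊢; exact e2))
    have hdv0 : dv ≠ i := by
      intro h
      have := edge_ne_succ hn h3R he
      rw [h] at this
      exact this rfl
    -- Crosses n (i+1) dv (i+2) i
    have hcwd1 : cwd (i+1) (i+2) = 1 := by
      rw [show i + 2 = (i+1)+1 by ring]; exact cwd_succ (by omega) (i+1)
    have hfar : 1 < cwd (i+1) dv := by
      have := cwd_pos_of_ne (show dv ≠ i + 1 from hdv1)
      rcases (by omega : cwd (i+1) dv = 1 ∨ 1 < cwd (i+1) dv) with h|h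
      · exact absurd (cwd_inj (a := i+1) (by omega)) hdv2
      · exact h
    have hdi : 0 < cwd dv i := cwd_pos_of_ne (Ne.symm hdv0)
    have hdi1 : cwd dv (i + 1) = cwd dv i + 1 := by
      have hlt := cwd_lt dv i
      rcases cwd_add_cases dv i (i + 1) with h|h
      · rw [h, cwd_succ (by omega) i]
      · rw [cwd_succ (by omega) i] at h
        have h0 : cwd dv (i+1) = 0 := by omega
        exact absurd (cwd_eq_zero_iff.1 h0) hdv1
    have hcross : Crosses n (i+1) dv (i+2) i := by
      refine ⟨⟨?_, ?_⟩, ⟨?_, ?_⟩⟩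
      · show 0 < cwd (i+1) (i+2); omega
      · show cwd (i+1) (i+2) < cwd (i+1) dv; omega
      · show 0 < cwd dv i; omega
      · show cwd dv i < cwd dv (i+1); omega
    exact T.noncross R hR _ hE (i+1) dv (i+2) i he e3 hcross

end Ear
section FlipFan
variable {n : ℕ} [NeZero n]

lemma between_iff {a x b : ZMod n} : Between n a x b ↔ 0 < cwd a x ∧ cwd a x < cwd a b :=
  Iff.rfl

/-- position facts for a flip quadrilateral `a,b,c,d` (clockwise). -/
lemma quad_pos {a b c d : ZMod n} (h1 : Between n a b c) (h2 : Between n c d a) :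
    0 < cwd a b ∧ cwd a b < cwd a c ∧ cwd a c < cwd a d ∧ cwd a d < n ∧
    cwd c d = cwd a d - cwd a c := by
  obtain ⟨g1, g2⟩ := between_iff.1 h1
  obtain ⟨g3, g4⟩ := between_iff.1 h2
  have hca : c ≠ a := by
    intro h
    have : cwd a c = 0 := cwd_eq_zero_iff.2 h.symm
    omega
  have hrev : cwd a c + cwd c a = n := cwd_rev (fun h => hca h.symm)
  have hd := cwd_lt a d
  rcases cwd_add_cases a c d with h|h
  · refine ⟨g1, g2, by omega, by omega, by omega⟩
  · omega

lemma quad_distinct {a b c d : ZMod n} (h1 : Between n a b c) (h2 : Between n c d a) :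
    ({a, b, c} : Finset (ZMod n)).card = 3 ∧ ({a, c, d} : Finset (ZMod n)).card = 3 ∧
    ({a, b, d} : Finset (ZMod n)).card = 3 ∧ ({b, c, d} : Finset (ZMod n)).card = 3 := by
  obtain ⟨p1, p2, p3, p4, p5⟩ := quad_pos h1 h2
  have hab : a ≠ b := fun h => by rw [← h, cwd_self] at p1; omega
  have hac : a ≠ c := fun h => by rw [← h, cwd_self] at p2; omega
  have had : a ≠ d := fun h => by rw [← h, cwd_self] at p3; omega
  have hbc : b ≠ c := fun h => by rw [h] at p2; omega
  have hbd : b ≠ d := fun h => by rw [h] at p2; omega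
  have hcd : c ≠ d := fun h => by rw [h] at p3; omega
  exact ⟨Finset.card_eq_three.mpr ⟨a, b, c, hab, hac, hbc, rfl⟩,
    Finset.card_eq_three.mpr ⟨a, c, d, hac, had, hcd, rfl⟩,
    Finset.card_eq_three.mpr ⟨a, b, d, hab, had, hbd, rfl⟩,
    Finset.card_eq_three.mpr ⟨b, c, d, hbc, hbd, hcd, rfl⟩⟩

lemma fan_flipstep {T T' : PolygonTiling n} (h : FlipStep n T T') (v : ZMod n) :
    Fan n T v → Fan n T' v := by
  obtain ⟨a, b, c, d, h1, h2, ht1, ht2, heq⟩ := h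
  obtain ⟨c1, c2, c3, c4⟩ := quad_distinct h1 h2
  intro hfan R hR hvR
  rw [heq] at hR
  rcases Finset.mem_union.1 hR with hR|hR
  · exact hfan R (Finset.mem_sdiff.1 hR).1 hvR
  · rcases Finset.mem_insert.1 hR with rfl|hR
    · exact c3
    · rw [Finset.mem_singleton] at hR; subst hR; exact c4

lemma flipstep_symm {T T' : PolygonTiling n} (h : FlipStep n T T') (v : ZMod n) :
    Fan n T' v → Fan n T v := by
  obtain ⟨a, b, c, d, h1, h2, ht1, ht2, heq⟩ := h
  obtain ⟨c1, c2, c3, c4⟩ := quad_distinct h1 h2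
  intro hfan R hR hvR
  by_cases hmem : R = ({a,b,c} : Finset (ZMod n)) ∨ R = ({a,c,d} : Finset (ZMod n))
  · rcases hmem with rfl|rfl
    · exact c1
    · exact c2
  · push_neg at hmem
    refine hfan R ?_ hvR
    rw [heq]
    apply Finset.mem_union_left
    rw [Finset.mem_sdiff]
    refine ⟨hR, ?_⟩
    simp only [Finset.mem_insert, Finset.mem_singleton]
    push_neg
    exact hmem

lemma fan_flipequiv {T T' : PolygonTiling n} (h : FlipEquiv n T T') (v : ZMod n) :
    Fan n T v ↔ Fan n T' v := by
  induction h with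
  | rel _ _ hstep => exact ⟨fan_flipstep hstep v, flipstep_symm hstep v⟩
  | refl _ => exact Iff.rfl
  | symm _ _ _ ih => exact ih.symm
  | trans _ _ _ _ _ ih1 ih2 => exact ih1.trans ih2

end FlipFan
section FlipBase
variable {n : ℕ} [NeZero n]

lemma cwd_eq_one {a b : ZMod n} (h : cwd a b = 1) : b = a + 1 := by
  have h2 := add_cwd a b
  rw [h] at h2
  rw [← h2, Nat.cast_one]

lemma crosses_rotate {m : ℕ} [NeZero m] {u v s t : ZMod m} (h : Crosses m u v s t) :
    Crosses m s t v u := by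
  obtain ⟨hA, hB⟩ := h
  obtain ⟨h1, h2⟩ := between_iff.1 hA
  obtain ⟨h3, h4⟩ := between_iff.1 hB
  have huv : 0 < cwd u v := by omega
  have hvu : u ≠ v := fun hh => by rw [hh, cwd_self] at huv; omega
  have e1 : cwd u v < cwd u t ∧ cwd v t = cwd u t - cwd u v := by
    rcases Nat.lt_or_ge (cwd u v) (cwd u t) with h'|h'
    · exact ⟨h', cwd_sub_coord (le_of_lt h')⟩
    · exfalso
      have hrev := cwd_rev hvu
      rcases cwd_add_cases v u t with h''|h''
      · have := cwd_lt u t; omega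
      · have := cwd_lt u t; omega
  obtain ⟨e1', e1⟩ := e1
  have hut : u ≠ t := fun hh => by rw [hh, cwd_self] at e1'; omega
  have hrevv := cwd_rev hvu
  have hrevt := cwd_rev hut
  have f1 : cwd s v = cwd u v - cwd u s := cwd_sub_coord (le_of_lt h2)
  have f2 : cwd s t = cwd u t - cwd u s := cwd_sub_coord (by omega)
  have f4 : cwd t v = (m : ℕ) - cwd u t + cwd u v := cwd_base_change hut (by omega)
  have f5 : cwd t s = (m : ℕ) - cwd u t + cwd u s := cwd_base_change hut (by omega)
  refine ⟨between_iff.2 ⟨?_, ?_⟩, between_iff.2 ⟨?_, ?_⟩⟩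
  · omega
  · omega
  · omega
  · omega

variable (T : PolygonTiling n) {a b c d : ZMod n}

/-- the old diagonal, directed both ways, is an edge of `t1`/`t2`. -/
lemma flip_edges (h1 : Between n a b c) (h2 : Between n c d a) :
    IsEdge n {a,b,c} a b ∧ IsEdge n {a,b,c} b c ∧ IsEdge n {a,b,c} c a ∧
    IsEdge n {a,c,d} a c ∧ IsEdge n {a,c,d} c d ∧ IsEdge n {a,c,d} d a ∧
    IsEdge n {a,b,d} a b ∧ IsEdge n {a,b,d} b d ∧ IsEdge n {a,b,d} d a ∧
    IsEdge n {b,c,d} b c ∧ IsEdge n {b,c,d} c d ∧ IsEdge n {b,c,d} d b := by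
  obtain ⟨p1, p2, p3, p4, p5⟩ := quad_pos h1 h2
  obtain ⟨e1, e2, e3⟩ := tri_edges p1 p2
  obtain ⟨f1, f2, f3⟩ := tri_edges (show 0 < cwd a c by omega) p3
  obtain ⟨g1, g2, g3⟩ := tri_edges p1 (show cwd a b < cwd a d by omega)
  have hbc : cwd b c = cwd a c - cwd a b := cwd_sub_coord (le_of_lt p2)
  have hbd : cwd b d = cwd a d - cwd a b := cwd_sub_coord (by omega)
  obtain ⟨k1, k2, k3⟩ := tri_edges (x := b) (y := c) (z := d) (by omega) (by omega)
  exact ⟨e1, e2, e3, f1, f2, f3, g1, g2, g3, k1, k2, k3⟩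

lemma no_edge_bd (h1 : Between n a b c) (h2 : Between n c d a)
    (ht2 : ({a,c,d} : Finset (ZMod n)) ∈ T.tiles) :
    ∀ P ∈ T.tiles, ¬ IsEdge n P b d ∧ ¬ IsEdge n P d b := by
  intro P hP
  obtain ⟨p1, p2, p3, p4, p5⟩ := quad_pos h1 h2
  obtain ⟨_, _, _, f1, _, _, _, _, _, _, _, _⟩ := flip_edges h1 h2
  constructor
  · intro he
    exact T.noncross _ ht2 P hP a c b d f1 he ⟨h1, h2⟩
  · intro he
    refine T.noncross P hP _ ht2 d b a c he f1 ⟨⟨?_, ?_⟩, ⟨?_, ?_⟩⟩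
    · show 0 < cwd d a
      have := cwd_rev (show a ≠ d from fun hh => by rw [← hh, cwd_self] at p3; omega)
      omega
    · show cwd d a < cwd d b
      have hrev := cwd_rev (show a ≠ d from fun hh => by rw [← hh, cwd_self] at p3; omega)
      have : cwd d b = n - cwd a d + cwd a b :=
        cwd_base_change (show a ≠ d from fun hh => by rw [← hh, cwd_self] at p3; omega) (by omega)
      omega
    · show 0 < cwd b c
      have : cwd b c = cwd a c - cwd a b := cwd_sub_coord (le_of_lt p2)
      omega
    · show cwd b c < cwd b d
      have e1 : cwd b c = cwd a c - cwd a b := cwd_sub_coord (le_of_lt p2)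
      have e2 : cwd b d = cwd a d - cwd a b := cwd_sub_coord (by omega)
      omega

lemma t3_t4_notin (h1 : Between n a b c) (h2 : Between n c d a)
    (ht2 : ({a,c,d} : Finset (ZMod n)) ∈ T.tiles) :
    ({a,b,d} : Finset (ZMod n)) ∉ T.tiles ∧ ({b,c,d} : Finset (ZMod n)) ∉ T.tiles := by
  obtain ⟨_, _, _, _, _, _, _, g2, _, _, _, k3⟩ := flip_edges h1 h2
  constructor
  · intro hmem
    exact (no_edge_bd T h1 h2 ht2 _ hmem).1 g2
  · intro hmem
    exact (no_edge_bd T h1 h2 ht2 _ hmem).2 k3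

end FlipBase
section NoCross
variable {n : ℕ} [NeZero n]

lemma no_cross_bd (hn : 3 ≤ n) (T : PolygonTiling n) {a b c d : ZMod n}
    (h1 : Between n a b c) (h2 : Between n c d a)
    (ht1 : ({a,b,c} : Finset (ZMod n)) ∈ T.tiles)
    (ht2 : ({a,c,d} : Finset (ZMod n)) ∈ T.tiles) :
    ∀ P ∈ T.tiles, P ≠ {a,b,c} → P ≠ {a,c,d} → ∀ x y : ZMod n, IsEdge n P x y →
      ¬ Crosses n b d x y ∧ ¬ Crosses n d b x y := by
  obtain ⟨p1, p2, p3, p4, p5⟩ := quad_pos h1 h2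
  obtain ⟨e1, e2, e3, f1, f2, f3, _, _, _, _, _, _⟩ := flip_edges h1 h2
  have hab : a ≠ b := fun h => by rw [← h, cwd_self] at p1; omega
  have hac : a ≠ c := fun h => by rw [← h, cwd_self] at p2; omega
  have had : a ≠ d := fun h => by rw [← h, cwd_self] at p3; omega
  have gb : cwd b a = n - cwd a b := by have := cwd_rev hab; omega
  have gc : cwd c a = n - cwd a c := by have := cwd_rev hac; omega
  have gd : cwd d a = n - cwd a d := by have := cwd_rev had; omega
  have gbc : cwd b c = cwd a c - cwd a b := cwd_sub_coord (le_of_lt p2)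
  have gbd : cwd b d = cwd a d - cwd a b := cwd_sub_coord (by omega)
  have gcb : cwd c b = n - cwd a c + cwd a b := cwd_base_change hac p2
  have gdb : cwd d b = n - cwd a d + cwd a b := cwd_base_change had (by omega)
  have gdc : cwd d c = n - cwd a d + cwd a c := cwd_base_change had p3
  intro P hP hPt1 hPt2 x y he
  have hxlt := cwd_lt a x
  have hylt := cwd_lt a y
  constructor
  · -- ¬ Crosses n b d x y
    rintro ⟨hA, hB⟩
    obtain ⟨hA1, hA2⟩ := between_iff.1 hA
    obtain ⟨hB1, hB2⟩ := between_iff.1 hB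
    -- x strictly between b and d
    have hx : cwd a b < cwd a x ∧ cwd a x < cwd a d := by
      rcases Nat.lt_or_ge (cwd a x) (cwd a b) with h'|h'
      · have : cwd b x = n - cwd a b + cwd a x := cwd_base_change hab h'
        omega
      · have : cwd b x = cwd a x - cwd a b := cwd_sub_coord h'
        omega
    -- y strictly between d and b (through a)
    have hy : cwd a d < cwd a y ∨ cwd a y < cwd a b := by
      rcases Nat.lt_or_ge (cwd a y) (cwd a d) with h'|h'
      · have : cwd d y = n - cwd a d + cwd a y := cwd_base_change had h'
        omega
      · have : cwd d y = cwd a y - cwd a d := cwd_sub_coord h'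
        rcases Nat.eq_or_lt_of_le h' with h''|h''
        · exfalso; have : cwd d y = 0 := by omega
          omega
        · left; exact h''
    have hax : a ≠ x := fun h => by rw [← h, cwd_self] at hx; omega
    rcases lt_trichotomy (cwd a x) (cwd a c) with hxc|hxc|hxc
    · -- x in (b, c)
      rcases hy with hyd|hyb
      · -- y in (d, n) : cross (a,c) with (x,y)
        have hcy : cwd c y = cwd a y - cwd a c := cwd_sub_coord (by omega)
        exact T.noncross _ ht2 P hP a c x y f1 he
          ⟨between_iff.2 ⟨by omega, by omega⟩, between_iff.2 ⟨by omega, by omega⟩⟩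
      · rcases Nat.eq_zero_or_pos (cwd a y) with hy0|hy0
        · -- y = a : cross (b,c) with (x,a)
          have hya : y = a := (cwd_eq_zero_iff.1 hy0).symm
          rw [hya] at he
          have hbx : cwd b x = cwd a x - cwd a b := cwd_sub_coord (by omega)
          exact T.noncross _ ht1 P hP b c x a e2 he
            ⟨between_iff.2 ⟨by omega, by omega⟩, between_iff.2 ⟨by omega, by omega⟩⟩
        · -- y in (0, b) : cross (x,y) with (a,b)
          have hxa : cwd x a = n - cwd a x := by have := cwd_rev hax; omega
          have hxy : cwd x y = n - cwd a x + cwd a y := cwd_base_change hax (by omega)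
          have hyb' : cwd y b = cwd a b - cwd a y := cwd_sub_coord (by omega)
          have hyx : cwd y x = cwd a x - cwd a y := cwd_sub_coord (by omega)
          exact T.noncross P hP _ ht1 x y a b he e1
            ⟨between_iff.2 ⟨by omega, by omega⟩, between_iff.2 ⟨by omega, by omega⟩⟩
    · -- x = c
      have hxc' : x = c := cwd_inj (a := a) hxc
      subst hxc'
      rcases hy with hyd|hyb
      · -- edge (c, y), y beyond d : cross (c,y) with (d,a)
        have hcy : cwd x y = cwd a y - cwd a x := cwd_sub_coord (by omega)
        have hya : cwd y a = n - cwd a y := by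
          have : a ≠ y := fun h => by rw [← h, cwd_self] at hyd; omega
          have := cwd_rev this; omega
        have hyc : cwd y x = n - cwd a y + cwd a x :=
          cwd_base_change (fun h => by rw [← h, cwd_self] at hyd; omega) (by omega)
        refine T.noncross P hP _ ht2 x y d a he f3
          ⟨between_iff.2 ⟨by omega, by omega⟩, between_iff.2 ⟨by omega, by omega⟩⟩
      · rcases Nat.eq_zero_or_pos (cwd a y) with hy0|hy0
        · -- edge (c, a) : P must be t1
          have hya : y = a := (cwd_eq_zero_iff.1 hy0).symm
          rw [hya] at he
          exact hPt1 (edge_unique hn T hP ht1 he e3)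
        · -- edge (c, y) with y in (0,b) : cross with (a,b)
          have hcy : cwd x y = n - cwd a x + cwd a y := cwd_base_change hac (by omega)
          have hca : cwd x a = n - cwd a x := by have := cwd_rev hac; omega
          have hyb' : cwd y b = cwd a b - cwd a y := cwd_sub_coord (by omega)
          have hyc : cwd y x = cwd a x - cwd a y := cwd_sub_coord (by omega)
          exact T.noncross P hP _ ht1 x y a b he e1
            ⟨between_iff.2 ⟨by omega, by omega⟩, between_iff.2 ⟨by omega, by omega⟩⟩
    · -- x in (c, d)
      rcases hy with hyd|hyb
      · -- cross (x,y) with (d,a)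
        have hxd : cwd x d = cwd a d - cwd a x := cwd_sub_coord (by omega)
        have hxy : cwd x y = cwd a y - cwd a x := cwd_sub_coord (by omega)
        have hya : cwd y a = n - cwd a y := by
          have : a ≠ y := fun h => by rw [← h, cwd_self] at hyd; omega
          have := cwd_rev this; omega
        have hyx : cwd y x = n - cwd a y + cwd a x :=
          cwd_base_change (fun h => by rw [← h, cwd_self] at hyd; omega) (by omega)
        exact T.noncross P hP _ ht2 x y d a he f3
          ⟨between_iff.2 ⟨by omega, by omega⟩, between_iff.2 ⟨by omega, by omega⟩⟩
      · rcases Nat.eq_zero_or_pos (cwd a y) with hy0|hy0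
        · -- y = a : cross (c,d) with (x,a)
          have hya : y = a := (cwd_eq_zero_iff.1 hy0).symm
          rw [hya] at he
          have hcx : cwd c x = cwd a x - cwd a c := cwd_sub_coord (by omega)
          exact T.noncross _ ht2 P hP c d x a f2 he
            ⟨between_iff.2 ⟨by omega, by omega⟩, between_iff.2 ⟨by omega, by omega⟩⟩
        · -- cross (x,y) with (a,c)
          have hxa : cwd x a = n - cwd a x := by have := cwd_rev hax; omega
          have hxy : cwd x y = n - cwd a x + cwd a y := cwd_base_change hax (by omega)
          have hyc : cwd y c = cwd a c - cwd a y := cwd_sub_coord (by omega)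
          have hyx : cwd y x = cwd a x - cwd a y := cwd_sub_coord (by omega)
          exact T.noncross P hP _ ht2 x y a c he f1
            ⟨between_iff.2 ⟨by omega, by omega⟩, between_iff.2 ⟨by omega, by omega⟩⟩
  · -- ¬ Crosses n d b x y
    rintro ⟨hA, hB⟩
    obtain ⟨hA1, hA2⟩ := between_iff.1 hA
    obtain ⟨hB1, hB2⟩ := between_iff.1 hB
    -- x beyond d or before b
    have hx : cwd a d < cwd a x ∨ cwd a x < cwd a b := by
      rcases Nat.lt_or_ge (cwd a x) (cwd a d) with h'|h'
      · have : cwd d x = n - cwd a d + cwd a x := cwd_base_change had h'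
        omega
      · have : cwd d x = cwd a x - cwd a d := cwd_sub_coord h'
        rcases Nat.eq_or_lt_of_le h' with h''|h''
        · exfalso; have : cwd d x = 0 := by omega
          omega
        · left; exact h''
    -- y strictly between b and d
    have hy : cwd a b < cwd a y ∧ cwd a y < cwd a d := by
      rcases Nat.lt_or_ge (cwd a y) (cwd a b) with h'|h'
      · have : cwd b y = n - cwd a b + cwd a y := cwd_base_change hab h'
        omega
      · have : cwd b y = cwd a y - cwd a b := cwd_sub_coord h'
        omega
    have hay : a ≠ y := fun h => by rw [← h, cwd_self] at hy; omega
    rcases lt_trichotomy (cwd a y) (cwd a c) with hyc|hyc|hyc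
    · -- y in (b,c)
      rcases hx with hxd|hxb
      · -- x beyond d : cross (x,y) with (a,c)
        have hax : a ≠ x := fun h => by rw [← h, cwd_self] at hxd; omega
        have hxa : cwd x a = n - cwd a x := by have := cwd_rev hax; omega
        have hxy : cwd x y = n - cwd a x + cwd a y := cwd_base_change hax (by omega)
        have hyc' : cwd y c = cwd a c - cwd a y := cwd_sub_coord (by omega)
        have hyx : cwd y x = cwd a x - cwd a y := cwd_sub_coord (by omega)
        exact T.noncross P hP _ ht2 x y a c he f1
          ⟨between_iff.2 ⟨by omega, by omega⟩, between_iff.2 ⟨by omega, by omega⟩⟩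
      · rcases Nat.eq_zero_or_pos (cwd a x) with hx0|hx0
        · -- x = a : cross (a,y) with (b,c)
          have hxa : x = a := (cwd_eq_zero_iff.1 hx0).symm
          rw [hxa] at he
          have hyc' : cwd y c = cwd a c - cwd a y := cwd_sub_coord (by omega)
          have hya : cwd y a = n - cwd a y := by have := cwd_rev hay; omega
          exact T.noncross P hP _ ht1 a y b c he e2
            ⟨between_iff.2 ⟨by omega, by omega⟩, between_iff.2 ⟨by omega, by omega⟩⟩
        · -- x in (0,b) : cross (a,b) with (x,y)
          have hby : cwd b y = cwd a y - cwd a b := cwd_sub_coord (by omega)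
          exact T.noncross _ ht1 P hP a b x y e1 he
            ⟨between_iff.2 ⟨by omega, by omega⟩, between_iff.2 ⟨by omega, by omega⟩⟩
    · -- y = c
      have hyc' : y = c := cwd_inj (a := a) hyc
      subst hyc'
      rcases hx with hxd|hxb
      · -- cross (d,a) with (x,c)
        have hdx : cwd d x = cwd a x - cwd a d := cwd_sub_coord (by omega)
        exact T.noncross _ ht2 P hP d a x y f3 he
          ⟨between_iff.2 ⟨by omega, by omega⟩, between_iff.2 ⟨by omega, by omega⟩⟩
      · rcases Nat.eq_zero_or_pos (cwd a x) with hx0|hx0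
        · -- edge (a, c) : P must be t2
          have hxa : x = a := (cwd_eq_zero_iff.1 hx0).symm
          rw [hxa] at he
          exact hPt2 (edge_unique hn T hP ht2 he f1)
        · -- cross (a,b) with (x,c)
          exact T.noncross _ ht1 P hP a b x y e1 he
            ⟨between_iff.2 ⟨by omega, by omega⟩, between_iff.2 ⟨by omega, by omega⟩⟩
    · -- y in (c,d)
      rcases hx with hxd|hxb
      · -- cross (d,a) with (x,y)
        have hdx : cwd d x = cwd a x - cwd a d := cwd_sub_coord (by omega)
        exact T.noncross _ ht2 P hP d a x y f3 he
          ⟨between_iff.2 ⟨by omega, by omega⟩, between_iff.2 ⟨by omega, by omega⟩⟩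
      · rcases Nat.eq_zero_or_pos (cwd a x) with hx0|hx0
        · -- x = a : cross (a,y) with (c,d)
          have hxa : x = a := (cwd_eq_zero_iff.1 hx0).symm
          rw [hxa] at he
          have hyd : cwd y d = cwd a d - cwd a y := cwd_sub_coord (by omega)
          have hya : cwd y a = n - cwd a y := by have := cwd_rev hay; omega
          exact T.noncross P hP _ ht2 a y c d he f2
            ⟨between_iff.2 ⟨by omega, by omega⟩, between_iff.2 ⟨by omega, by omega⟩⟩
        · -- cross (a,c) with (x,y)
          have hcy : cwd c y = cwd a y - cwd a c := cwd_sub_coord (by omega)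
          exact T.noncross _ ht2 P hP a c x y f1 he
            ⟨between_iff.2 ⟨by omega, by omega⟩, between_iff.2 ⟨by omega, by omega⟩⟩

end NoCross
section FlipUtil
variable {n : ℕ} [NeZero n]

lemma quad_ne {a b c d : ZMod n} (h1 : Between n a b c) (h2 : Between n c d a) :
    a ≠ b ∧ a ≠ c ∧ a ≠ d ∧ b ≠ c ∧ b ≠ d ∧ c ≠ d := by
  obtain ⟨p1, p2, p3, p4, p5⟩ := quad_pos h1 h2
  refine ⟨?_, ?_, ?_, ?_, ?_, ?_⟩
  · intro h; rw [← h, cwd_self] at p1; omega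
  · intro h; rw [← h, cwd_self] at p2; omega
  · intro h; rw [← h, cwd_self] at p3; omega
  · intro h; rw [h] at p2; omega
  · intro h; rw [h] at p2; omega
  · intro h; rw [h] at p3; omega

/-- at most one tile of the flipped family has a given directed edge. -/
lemma edge_unique_S (hn : 3 ≤ n) (T : PolygonTiling n) {a b c d : ZMod n}
    (h1 : Between n a b c) (h2 : Between n c d a)
    (ht1 : ({a,b,c} : Finset (ZMod n)) ∈ T.tiles)
    (ht2 : ({a,c,d} : Finset (ZMod n)) ∈ T.tiles) :
    ∀ R R' : Finset (ZMod n),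
      (R ∈ T.tiles ∧ R ≠ {a,b,c} ∧ R ≠ {a,c,d}) ∨ R = {a,b,d} ∨ R = {b,c,d} →
      (R' ∈ T.tiles ∧ R' ≠ {a,b,c} ∧ R' ≠ {a,c,d}) ∨ R' = {a,b,d} ∨ R' = {b,c,d} →
      ∀ u v : ZMod n, IsEdge n R u v → IsEdge n R' u v → R = R' := by
  obtain ⟨p1, p2, p3, p4, p5⟩ := quad_pos h1 h2
  obtain ⟨hab, hac, had, hbc, hbd, hcd⟩ := quad_ne h1 h2
  obtain ⟨e1, e2, e3, f1, f2, f3, g1, g2, g3, k1, k2, k3⟩ := flip_edges h1 h2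
  have gbc : cwd b c = cwd a c - cwd a b := cwd_sub_coord (le_of_lt p2)
  have gbd : cwd b d = cwd a d - cwd a b := cwd_sub_coord (by omega)
  have it3 : ∀ u v : ZMod n, IsEdge n {a,b,d} u v ↔
      (u = a ∧ v = b) ∨ (u = b ∧ v = d) ∨ (u = d ∧ v = a) := fun u v =>
    isEdge_tri_iff p1 (by omega)
  have it4 : ∀ u v : ZMod n, IsEdge n {b,c,d} u v ↔
      (u = b ∧ v = c) ∨ (u = c ∧ v = d) ∨ (u = d ∧ v = b) := fun u v =>
    isEdge_tri_iff (x := b) (y := c) (z := d) (by omega) (by omega)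
  -- an old tile (other than t1, t2) cannot carry an edge of the new triangles
  have hold3 : ∀ R, R ∈ T.tiles → R ≠ {a,b,c} → R ≠ {a,c,d} →
      ∀ u v : ZMod n, IsEdge n R u v → ¬ IsEdge n ({a,b,d} : Finset (ZMod n)) u v := by
    intro R hR hR1 hR2 u v he he'
    rcases (it3 u v).1 he' with ⟨rfl, rfl⟩|⟨rfl, rfl⟩|⟨rfl, rfl⟩
    · exact hR1 (edge_unique hn T hR ht1 he e1)
    · exact (no_edge_bd T h1 h2 ht2 R hR).1 he
    · exact hR2 (edge_unique hn T hR ht2 he f3)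
  have hold4 : ∀ R, R ∈ T.tiles → R ≠ {a,b,c} → R ≠ {a,c,d} →
      ∀ u v : ZMod n, IsEdge n R u v → ¬ IsEdge n ({b,c,d} : Finset (ZMod n)) u v := by
    intro R hR hR1 hR2 u v he he'
    rcases (it4 u v).1 he' with ⟨rfl, rfl⟩|⟨rfl, rfl⟩|⟨rfl, rfl⟩
    · exact hR1 (edge_unique hn T hR ht1 he e2)
    · exact hR2 (edge_unique hn T hR ht2 he f2)
    · exact (no_edge_bd T h1 h2 ht2 R hR).2 he
  have h34 : ∀ u v : ZMod n, IsEdge n ({a,b,d} : Finset (ZMod n)) u v →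
      ¬ IsEdge n ({b,c,d} : Finset (ZMod n)) u v := by
    intro u v he he'
    rcases (it3 u v).1 he with ⟨rfl, rfl⟩|⟨rfl, rfl⟩|⟨rfl, rfl⟩ <;>
      rcases (it4 u v).1 he' with ⟨hx, hy⟩|⟨hx, hy⟩|⟨hx, hy⟩
    · exact hab hx
    · exact hac hx
    · exact had hx
    · exact hcd hy.symm
    · exact hbc hx
    · exact hbd hx
    · exact hbd hx.symm
    · exact hcd hx.symm
    · exact hab hy
  intro R R' hR hR' u v he he'
  rcases hR with ⟨hRt, hR1, hR2⟩|rfl|rfl <;> rcases hR' with ⟨hR't, hR'1, hR'2⟩|rfl|rfl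
  · exact edge_unique hn T hRt hR't he he'
  · exact absurd he' (hold3 R hRt hR1 hR2 u v he)
  · exact absurd he' (hold4 R hRt hR1 hR2 u v he)
  · exact absurd he (hold3 R' hR't hR'1 hR'2 u v he')
  · rfl
  · exact absurd he' (h34 u v he)
  · exact absurd he (hold4 R' hR't hR'1 hR'2 u v he')
  · exact absurd he (h34 u v he')
  · rfl

/-- decomposition of directed edges of the flipped family. -/
lemma edge_decomp (hn : 3 ≤ n) (T : PolygonTiling n) {a b c d : ZMod n}
    (h1 : Between n a b c) (h2 : Between n c d a)
    (ht1 : ({a,b,c} : Finset (ZMod n)) ∈ T.tiles)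
    (ht2 : ({a,c,d} : Finset (ZMod n)) ∈ T.tiles) :
    ∀ R : Finset (ZMod n),
      (R ∈ T.tiles ∧ R ≠ {a,b,c} ∧ R ≠ {a,c,d}) ∨ R = {a,b,d} ∨ R = {b,c,d} →
      ∀ x y : ZMod n, IsEdge n R x y →
      (∃ P, P ∈ T.tiles ∧ P ≠ {a,b,c} ∧ P ≠ {a,c,d} ∧ IsEdge n P x y) ∨
      ((x = a ∧ y = b) ∨ (x = b ∧ y = c) ∨ (x = c ∧ y = d) ∨ (x = d ∧ y = a) ∨
       (x = b ∧ y = d) ∨ (x = d ∧ y = b)) := by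
  obtain ⟨p1, p2, p3, p4, p5⟩ := quad_pos h1 h2
  have gbc : cwd b c = cwd a c - cwd a b := cwd_sub_coord (le_of_lt p2)
  have gbd : cwd b d = cwd a d - cwd a b := cwd_sub_coord (by omega)
  intro R hR x y he
  rcases hR with ⟨hRt, hR1, hR2⟩|rfl|rfl
  · exact Or.inl ⟨R, hRt, hR1, hR2, he⟩
  · rcases (isEdge_tri_iff p1 (by omega : cwd a b < cwd a d)).1 he with ⟨hx,hy⟩|⟨hx,hy⟩|⟨hx,hy⟩
    · right; tauto
    · right; tauto
    · right; tauto
  · rcases (isEdge_tri_iff (x := b) (y := c) (z := d) (by omega) (by omega)).1 he with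
      ⟨hx,hy⟩|⟨hx,hy⟩|⟨hx,hy⟩
    · right; tauto
    · right; tauto
    · right; tauto

end FlipUtil
section FlipInter
variable {n : ℕ} [NeZero n]

lemma inter_t3 (hn : 3 ≤ n) (T : PolygonTiling n) {a b c d : ZMod n}
    (h1 : Between n a b c) (h2 : Between n c d a)
    (ht1 : ({a,b,c} : Finset (ZMod n)) ∈ T.tiles)
    (ht2 : ({a,c,d} : Finset (ZMod n)) ∈ T.tiles) :
    ∀ R ∈ T.tiles, R ≠ {a,b,c} → (R ∩ {a,b,d}).card ≤ 2 := by
  obtain ⟨p1, p2, p3, p4, p5⟩ := quad_pos h1 h2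
  obtain ⟨hab, hac, had, hbc, hbd, hcd⟩ := quad_ne h1 h2
  obtain ⟨c1, c2, c3, c4⟩ := quad_distinct h1 h2
  obtain ⟨e1, e2, e3, f1, f2, f3, g1, g2, g3, k1, k2, k3⟩ := flip_edges h1 h2
  have gc : cwd c a = n - cwd a c := by have := cwd_rev hac; omega
  intro R hR hRt1
  by_contra hcon
  push_neg at hcon
  have hsub : R ∩ {a,b,d} ⊆ {a,b,d} := Finset.inter_subset_right
  have heq : R ∩ {a,b,d} = {a,b,d} := Finset.eq_of_subset_of_card_le hsub (by omega)
  have ht3R : ({a,b,d} : Finset (ZMod n)) ⊆ R := by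
    rw [← heq]; exact Finset.inter_subset_left
  have haR : a ∈ R := ht3R (by simp)
  have hbR : b ∈ R := ht3R (by simp)
  have hdR : d ∈ R := ht3R (by simp)
  by_cases hcR : c ∈ R
  · have hsub2 : ({a,b,c} : Finset (ZMod n)) ⊆ R ∩ {a,b,c} := by
      intro e he
      refine Finset.mem_inter.2 ⟨?_, he⟩
      rcases tri_mem_cases he with rfl|rfl|rfl
      · exact haR
      · exact hbR
      · exact hcR
    have hle := Finset.card_le_card hsub2
    have := T.inter_small R hR _ ht1 hRt1
    have : ({a,b,c} : Finset (ZMod n)).card = 3 := c1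
    omega
  · set Fs := R.filter (fun u => cwd a b ≤ cwd a u ∧ cwd a u < cwd a c) with hFs
    have hbF : b ∈ Fs := Finset.mem_filter.2 ⟨hbR, le_refl _, p2⟩
    obtain ⟨x, hxF, hxmax⟩ := Finset.exists_max_image Fs (fun u => cwd a u) ⟨b, hbF⟩
    obtain ⟨hxR, hxb, hxc⟩ := Finset.mem_filter.1 hxF
    have hdx : d ≠ x := by
      intro h
      rw [← h] at hxc
      omega
    obtain ⟨hyR, hyx, hymin⟩ := cnext_spec hdR hdx
    set y := cnext n R x with hy
    have hxd' : cwd x d = cwd a d - cwd a x := cwd_sub_coord (by omega)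
    have hxyle : cwd x y ≤ cwd x d := hymin d hdR hdx
    have hxy0 : 0 < cwd x y := cwd_pos_of_ne hyx
    have hay : cwd a y = cwd a x + cwd x y := by
      rcases cwd_add_cases a x y with h|h
      · exact h
      · exfalso
        have := cwd_lt a d
        omega
    have hyc : cwd a y ≠ cwd a c := by
      intro h
      exact hcR ((cwd_inj (a := a) h) ▸ hyR)
    have hcy : cwd a c < cwd a y := by
      rcases Nat.lt_or_ge (cwd a y) (cwd a c) with hlt|hge
      · exfalso
        have hyF : y ∈ Fs := Finset.mem_filter.2 ⟨hyR, by omega, hlt⟩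
        have := hxmax y hyF
        omega
      · omega
    have hedge : IsEdge n R x y := ⟨hxR, hyR, Ne.symm hyx, rfl⟩
    have hcy2 : cwd c y = cwd a y - cwd a c := cwd_sub_coord (by omega)
    refine T.noncross _ ht2 R hR a c x y f1 hedge
      ⟨between_iff.2 ⟨by omega, by omega⟩, between_iff.2 ⟨by omega, by omega⟩⟩

lemma inter_t4 (hn : 3 ≤ n) (T : PolygonTiling n) {a b c d : ZMod n}
    (h1 : Between n a b c) (h2 : Between n c d a)
    (ht1 : ({a,b,c} : Finset (ZMod n)) ∈ T.tiles)
    (ht2 : ({a,c,d} : Finset (ZMod n)) ∈ T.tiles) :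
    ∀ R ∈ T.tiles, R ≠ {a,c,d} → (R ∩ {b,c,d}).card ≤ 2 := by
  obtain ⟨p1, p2, p3, p4, p5⟩ := quad_pos h1 h2
  obtain ⟨hab, hac, had, hbc, hbd, hcd⟩ := quad_ne h1 h2
  obtain ⟨c1, c2, c3, c4⟩ := quad_distinct h1 h2
  obtain ⟨e1, e2, e3, f1, f2, f3, g1, g2, g3, k1, k2, k3⟩ := flip_edges h1 h2
  have gd : cwd d a = n - cwd a d := by have := cwd_rev had; omega
  intro R hR hRt2
  by_contra hcon
  push_neg at hcon
  have hsub : R ∩ {b,c,d} ⊆ {b,c,d} := Finset.inter_subset_right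
  have heq : R ∩ {b,c,d} = {b,c,d} := Finset.eq_of_subset_of_card_le hsub (by omega)
  have ht4R : ({b,c,d} : Finset (ZMod n)) ⊆ R := by
    rw [← heq]; exact Finset.inter_subset_left
  have hbR : b ∈ R := ht4R (by simp)
  have hcR : c ∈ R := ht4R (by simp)
  have hdR : d ∈ R := ht4R (by simp)
  by_cases haR : a ∈ R
  · have hsub2 : ({a,c,d} : Finset (ZMod n)) ⊆ R ∩ {a,c,d} := by
      intro e he
      refine Finset.mem_inter.2 ⟨?_, he⟩
      rcases tri_mem_cases he with rfl|rfl|rfl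
      · exact haR
      · exact hcR
      · exact hdR
    have hle := Finset.card_le_card hsub2
    have := T.inter_small R hR _ ht2 hRt2
    have : ({a,c,d} : Finset (ZMod n)).card = 3 := c2
    omega
  · obtain ⟨M, hMR, hMmax⟩ := Finset.exists_max_image R (fun u => cwd a u) ⟨b, hbR⟩
    obtain ⟨m, hmR, hmmin⟩ := Finset.exists_min_image R (fun u => cwd a u) ⟨b, hbR⟩
    have h0 : ∀ e ∈ R, 0 < cwd a e := by
      intro e he
      refine cwd_pos_of_ne (fun h => haR ?_)
      rw [← h]; exact he
    have hmb : cwd a m ≤ cwd a b := hmmin b hbR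
    have hMd : cwd a d ≤ cwd a M := hMmax d hdR
    have hmM : m ≠ M := by
      intro h
      rw [h] at hmb
      omega
    have haM : a ≠ M := fun h => haR (by rw [h]; exact hMR)
    have hMm : cwd M m = n - cwd a M + cwd a m := cwd_base_change haM (by omega)
    have hMlt := cwd_lt a M
    have hedge : IsEdge n R M m := by
      refine ⟨hMR, hmR, Ne.symm hmM, (cnext_eq hmR hmM ?_).symm⟩
      intro e he heM
      have hlt : cwd a e < cwd a M := by
        have h1' := hMmax e he
        rcases Nat.eq_or_lt_of_le h1' with h''|h''
        · exact absurd (cwd_inj (a := a) h'') heM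
        · exact h''
      have hMe : cwd M e = n - cwd a M + cwd a e := cwd_base_change haM hlt
      have := hmmin e he
      omega
    have hMa : cwd M a = n - cwd a M := by have := cwd_rev haM; omega
    rcases Nat.lt_or_ge (cwd a m) (cwd a b) with hmlt|hmge
    · -- wrap edge crosses (a,b)
      have hmb' : cwd m b = cwd a b - cwd a m := cwd_sub_coord (le_of_lt hmlt)
      have hmM' : cwd m M = cwd a M - cwd a m := cwd_sub_coord (by omega)
      have h0m := h0 m hmR
      exact T.noncross R hR _ ht1 M m a b hedge e1
        ⟨between_iff.2 ⟨by omega, by omega⟩, between_iff.2 ⟨by omega, by omega⟩⟩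
    · have hmb2 : m = b := cwd_inj (a := a) (by omega)
      rcases Nat.lt_or_ge (cwd a d) (cwd a M) with hMgt|hMle
      · -- wrap edge crosses (d,a)
        rw [hmb2] at hedge
        have hdM : cwd d M = cwd a M - cwd a d := cwd_sub_coord (le_of_lt hMgt)
        exact T.noncross _ ht2 R hR d a M b f3 hedge
          ⟨between_iff.2 ⟨by omega, by omega⟩, between_iff.2 ⟨by omega, by omega⟩⟩
      · -- wrap edge is (d,b) : forbidden
        have hMd2 : M = d := cwd_inj (a := a) (by omega)
        rw [hmb2, hMd2] at hedge
        exact (no_edge_bd T h1 h2 ht2 R hR).2 hedge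

end FlipInter
section FlipExists
variable {n : ℕ} [NeZero n]

lemma flip_exists (hn : 3 ≤ n) (T : PolygonTiling n) {a b c d : ZMod n}
    (h1 : Between n a b c) (h2 : Between n c d a)
    (ht1 : ({a,b,c} : Finset (ZMod n)) ∈ T.tiles)
    (ht2 : ({a,c,d} : Finset (ZMod n)) ∈ T.tiles) :
    ∃ T' : PolygonTiling n, FlipStep n T T' ∧
      T'.tiles = (T.tiles \ {({a,b,c} : Finset (ZMod n)), {a,c,d}}) ∪ {{a,b,d}, {b,c,d}} := by
  obtain ⟨p1, p2, p3, p4, p5⟩ := quad_pos h1 h2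
  obtain ⟨hab, hac, had, hbc, hbd, hcd⟩ := quad_ne h1 h2
  obtain ⟨c1, c2, c3, c4⟩ := quad_distinct h1 h2
  obtain ⟨e1, e2, e3, f1, f2, f3, g1, g2, g3, k1, k2, k3⟩ := flip_edges h1 h2
  obtain ⟨hnt3, hnt4⟩ := t3_t4_notin T h1 h2 ht2
  have gbc : cwd b c = cwd a c - cwd a b := cwd_sub_coord (le_of_lt p2)
  have gbd : cwd b d = cwd a d - cwd a b := cwd_sub_coord (by omega)
  have gba : cwd b a = n - cwd a b := by have := cwd_rev hab; omega
  have gca : cwd c a = n - cwd a c := by have := cwd_rev hac; omega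
  have gda : cwd d a = n - cwd a d := by have := cwd_rev had; omega
  have gcb : cwd c b = n - cwd a c + cwd a b := cwd_base_change hac p2
  have gdb : cwd d b = n - cwd a d + cwd a b := cwd_base_change had (by omega)
  have gdc : cwd d c = n - cwd a d + cwd a c := cwd_base_change had p3
  set S : Finset (Finset (ZMod n)) :=
    (T.tiles \ {({a,b,c} : Finset (ZMod n)), {a,c,d}}) ∪ {{a,b,d}, {b,c,d}} with hSdef
  have hmem : ∀ R : Finset (ZMod n), R ∈ S ↔
      ((R ∈ T.tiles ∧ R ≠ {a,b,c} ∧ R ≠ {a,c,d}) ∨ R = {a,b,d} ∨ R = {b,c,d}) := by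
    intro R
    simp only [hSdef, Finset.mem_union, Finset.mem_sdiff, Finset.mem_insert,
      Finset.mem_singleton]
    tauto
  have huniq := edge_unique_S hn T h1 h2 ht1 ht2
  have hdecomp := edge_decomp hn T h1 h2 ht1 ht2
  have ht3S : ({a,b,d} : Finset (ZMod n)) ∈ S := (hmem _).2 (Or.inr (Or.inl rfl))
  have ht4S : ({b,c,d} : Finset (ZMod n)) ∈ S := (hmem _).2 (Or.inr (Or.inr rfl))
  have ht34 : ({a,b,d} : Finset (ZMod n)) ≠ {b,c,d} := by
    intro h
    have : a ∈ ({b,c,d} : Finset (ZMod n)) := by rw [← h]; simp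
    rcases tri_mem_cases this with h'|h'|h'
    · exact hab h'
    · exact hac h'
    · exact had h'
  refine ⟨{ tiles := S
            three_le := ?_
            boundary_edge := ?_
            diag_shared := ?_
            inter_small := ?_
            noncross := ?_ }, ⟨a, b, c, d, h1, h2, ht1, ht2, hSdef⟩, hSdef⟩
  · -- three_le
    intro Q hQ
    rcases (hmem Q).1 hQ with ⟨hQt, _, _⟩|rfl|rfl
    · exact T.three_le Q hQt
    · omega
    · omega
  · -- boundary_edge
    intro i
    obtain ⟨Q0, ⟨hQ0, he0⟩, hU⟩ := T.boundary_edge i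
    have main : ∃ W, W ∈ S ∧ IsEdge n W i (i + 1) := by
      by_cases hQ01 : Q0 = {a,b,c}
      · rw [hQ01] at he0
        rcases (isEdge_tri_iff p1 p2).1 he0 with ⟨hia, hib⟩|⟨hia, hib⟩|⟨hia, hib⟩
        · exact ⟨{a,b,d}, ht3S, by rw [hib, hia]; exact g1⟩
        · exact ⟨{b,c,d}, ht4S, by rw [hib, hia]; exact k1⟩
        · exfalso
          have hone : cwd i (i+1) = 1 := cwd_succ (by omega) i
          rw [hib, hia] at hone
          omega
      by_cases hQ02 : Q0 = {a,c,d}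
      · rw [hQ02] at he0
        rcases (isEdge_tri_iff (show 0 < cwd a c by omega) p3).1 he0 with
          ⟨hia, hib⟩|⟨hia, hib⟩|⟨hia, hib⟩
        · exfalso
          have hone : cwd i (i+1) = 1 := cwd_succ (by omega) i
          rw [hib, hia] at hone
          omega
        · exact ⟨{b,c,d}, ht4S, by rw [hib, hia]; exact k2⟩
        · exact ⟨{a,b,d}, ht3S, by rw [hib, hia]; exact g3⟩
      · exact ⟨Q0, (hmem Q0).2 (Or.inl ⟨hQ0, hQ01, hQ02⟩), he0⟩
    obtain ⟨W, hWS, hWe⟩ := main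
    exact ⟨W, ⟨hWS, hWe⟩, fun R hR =>
      huniq R W ((hmem R).1 hR.1) ((hmem W).1 hWS) i (i + 1) hR.2 hWe⟩
  · -- diag_shared
    intro Q hQS u v he hdiag
    have main : ∃ P, P ∈ S ∧ P ≠ Q ∧ IsEdge n P v u := by
      rcases (hmem Q).1 hQS with ⟨hQt, hQ1, hQ2⟩|rfl|rfl
      · obtain ⟨P, ⟨hPt, hPQ, hPe⟩, _⟩ := T.diag_shared Q hQt u v he hdiag
        by_cases hP1 : P = {a,b,c}
        · rw [hP1] at hPe
          rcases (isEdge_tri_iff p1 p2).1 hPe with ⟨hv, hu⟩|⟨hv, hu⟩|⟨hv, hu⟩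
          · refine ⟨{a,b,d}, ht3S, fun h => hnt3 (by rw [h]; exact hQt), ?_⟩
            rw [hv, hu]; exact g1
          · refine ⟨{b,c,d}, ht4S, fun h => hnt4 (by rw [h]; exact hQt), ?_⟩
            rw [hv, hu]; exact k1
          · exfalso
            rw [hu, hv] at he
            exact hQ2 (edge_unique hn T hQt ht2 he f1)
        by_cases hP2 : P = {a,c,d}
        · rw [hP2] at hPe
          rcases (isEdge_tri_iff (show 0 < cwd a c by omega) p3).1 hPe with
            ⟨hv, hu⟩|⟨hv, hu⟩|⟨hv, hu⟩
          · exfalso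
            rw [hu, hv] at he
            exact hQ1 (edge_unique hn T hQt ht1 he e3)
          · refine ⟨{b,c,d}, ht4S, fun h => hnt4 (by rw [h]; exact hQt), ?_⟩
            rw [hv, hu]; exact k2
          · refine ⟨{a,b,d}, ht3S, fun h => hnt3 (by rw [h]; exact hQt), ?_⟩
            rw [hv, hu]; exact g3
        · exact ⟨P, (hmem P).2 (Or.inl ⟨hPt, hP1, hP2⟩), hPQ, hPe⟩
      · -- Q = {a,b,d}
        rcases (isEdge_tri_iff p1 (show cwd a b < cwd a d by omega)).1 he with
          ⟨hu, hv⟩|⟨hu, hv⟩|⟨hu, hv⟩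
        · obtain ⟨P, ⟨hPt, hPne, hPe⟩, _⟩ :=
            T.diag_shared _ ht1 a b e1 (by rw [hu, hv] at hdiag; exact hdiag)
          have hPnt2 : P ≠ {a,c,d} := by
            intro h
            have hbP : b ∈ P := hPe.1
            rw [h] at hbP
            rcases tri_mem_cases hbP with h'|h'|h'
            · exact hab h'.symm
            · exact hbc h'
            · exact hbd h'
          refine ⟨P, (hmem P).2 (Or.inl ⟨hPt, hPne, hPnt2⟩),
            fun h => hnt3 (by rw [← h]; exact hPt), ?_⟩
          rw [hv, hu]; exact hPe
        · exact ⟨{b,c,d}, ht4S, fun h => ht34 h.symm, by rw [hv, hu]; exact k3⟩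
        · obtain ⟨P, ⟨hPt, hPne, hPe⟩, _⟩ :=
            T.diag_shared _ ht2 d a f3 (by rw [hu, hv] at hdiag; exact hdiag)
          have hPnt1 : P ≠ {a,b,c} := by
            intro h
            have hdP : d ∈ P := hPe.2.1
            rw [h] at hdP
            rcases tri_mem_cases hdP with h'|h'|h'
            · exact had h'.symm
            · exact hbd h'.symm
            · exact hcd h'.symm
          refine ⟨P, (hmem P).2 (Or.inl ⟨hPt, hPnt1, hPne⟩),
            fun h => hnt3 (by rw [← h]; exact hPt), ?_⟩
          rw [hv, hu]; exact hPe
      · -- Q = {b,c,d}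
        rcases (isEdge_tri_iff (x := b) (y := c) (z := d) (by omega) (by omega)).1 he with
          ⟨hu, hv⟩|⟨hu, hv⟩|⟨hu, hv⟩
        · obtain ⟨P, ⟨hPt, hPne, hPe⟩, _⟩ :=
            T.diag_shared _ ht1 b c e2 (by rw [hu, hv] at hdiag; exact hdiag)
          have hPnt2 : P ≠ {a,c,d} := by
            intro h
            have hbP : b ∈ P := hPe.2.1
            rw [h] at hbP
            rcases tri_mem_cases hbP with h'|h'|h'
            · exact hab h'.symm
            · exact hbc h'
            · exact hbd h'
          refine ⟨P, (hmem P).2 (Or.inl ⟨hPt, hPne, hPnt2⟩),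
            fun h => hnt4 (by rw [← h]; exact hPt), ?_⟩
          rw [hv, hu]; exact hPe
        · obtain ⟨P, ⟨hPt, hPne, hPe⟩, _⟩ :=
            T.diag_shared _ ht2 c d f2 (by rw [hu, hv] at hdiag; exact hdiag)
          have hPnt1 : P ≠ {a,b,c} := by
            intro h
            have hdP : d ∈ P := hPe.1
            rw [h] at hdP
            rcases tri_mem_cases hdP with h'|h'|h'
            · exact had h'.symm
            · exact hbd h'.symm
            · exact hcd h'.symm
          refine ⟨P, (hmem P).2 (Or.inl ⟨hPt, hPnt1, hPne⟩),
            fun h => hnt4 (by rw [← h]; exact hPt), ?_⟩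
          rw [hv, hu]; exact hPe
        · exact ⟨{a,b,d}, ht3S, fun h => ht34 h, by rw [hv, hu]; exact g2⟩
    obtain ⟨P, hPS, hPQ, hPe⟩ := main
    exact ⟨P, ⟨hPS, hPQ, hPe⟩, fun R hR =>
      huniq R P ((hmem R).1 hR.1) ((hmem P).1 hPS) v u hR.2.2 hPe⟩
  · -- inter_small
    intro Q hQ Q' hQ' hne
    have hI3 := inter_t3 hn T h1 h2 ht1 ht2
    have hI4 := inter_t4 hn T h1 h2 ht1 ht2
    have h34 : (({a,b,d} : Finset (ZMod n)) ∩ {b,c,d}).card ≤ 2 := by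
      have hsub : ({a,b,d} : Finset (ZMod n)) ∩ {b,c,d} ⊆ {b, d} := by
        intro e he
        obtain ⟨h3, h4⟩ := Finset.mem_inter.1 he
        simp only [Finset.mem_insert, Finset.mem_singleton] at h3 h4 ⊢
        rcases h3 with rfl|rfl|rfl
        · rcases h4 with h|h|h
          · exact absurd h hab
          · exact absurd h hac
          · exact absurd h had
        · exact Or.inl rfl
        · exact Or.inr rfl
      have hc1 := Finset.card_le_card hsub
      have hc2 : ({b, d} : Finset (ZMod n)).card ≤ 2 := by
        apply le_trans (Finset.card_insert_le _ _); simp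
      omega
    rcases (hmem Q).1 hQ with ⟨hQt, hQ1, hQ2⟩|rfl|rfl <;>
      rcases (hmem Q').1 hQ' with ⟨hQ't, hQ'1, hQ'2⟩|rfl|rfl
    · exact T.inter_small Q hQt Q' hQ't hne
    · exact hI3 Q hQt hQ1
    · exact hI4 Q hQt hQ2
    · rw [Finset.inter_comm]; exact hI3 Q' hQ't hQ'1
    · exact absurd rfl hne
    · exact h34
    · rw [Finset.inter_comm]; exact hI4 Q' hQ't hQ'2
    · rw [Finset.inter_comm]; exact h34
    · exact absurd rfl hne
  · -- noncross
    intro Q hQ Q' hQ' x y u v he he'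
    have hnc := no_cross_bd hn T h1 h2 ht1 ht2
    have sa := cwd_self a
    have sb := cwd_self b
    have sc := cwd_self c
    have sd := cwd_self d
    rcases hdecomp Q ((hmem Q).1 hQ) x y he with ⟨P, hPt, hP1, hP2, hPe⟩|hxy
    · rcases hdecomp Q' ((hmem Q').1 hQ') u v he' with ⟨P', hP't, hP'1, hP'2, hP'e⟩|huv
      · exact T.noncross P hPt P' hP't x y u v hPe hP'e
      · rcases huv with ⟨hu', hv'⟩|⟨hu', hv'⟩|⟨hu', hv'⟩|⟨hu', hv'⟩|⟨hu', hv'⟩|⟨hu', hv'⟩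
        · rw [hu', hv']; exact T.noncross P hPt _ ht1 x y a b hPe e1
        · rw [hu', hv']; exact T.noncross P hPt _ ht1 x y b c hPe e2
        · rw [hu', hv']; exact T.noncross P hPt _ ht2 x y c d hPe f2
        · rw [hu', hv']; exact T.noncross P hPt _ ht2 x y d a hPe f3
        · rw [hu', hv']
          intro hcr
          have h' := crosses_rotate hcr
          exact (hnc P hPt hP1 hP2 x y hPe).2 ⟨h'.2, h'.1⟩
        · rw [hu', hv']
          intro hcr
          have h' := crosses_rotate hcr
          exact (hnc P hPt hP1 hP2 x y hPe).1 ⟨h'.2, h'.1⟩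
    · rcases hdecomp Q' ((hmem Q').1 hQ') u v he' with ⟨P', hP't, hP'1, hP'2, hP'e⟩|huv
      · rcases hxy with ⟨hx', hy'⟩|⟨hx', hy'⟩|⟨hx', hy'⟩|⟨hx', hy'⟩|⟨hx', hy'⟩|⟨hx', hy'⟩
        · rw [hx', hy']; exact T.noncross _ ht1 P' hP't a b u v e1 hP'e
        · rw [hx', hy']; exact T.noncross _ ht1 P' hP't b c u v e2 hP'e
        · rw [hx', hy']; exact T.noncross _ ht2 P' hP't c d u v f2 hP'e
        · rw [hx', hy']; exact T.noncross _ ht2 P' hP't d a u v f3 hP'e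
        · rw [hx', hy']; exact fun hcr => (hnc P' hP't hP'1 hP'2 u v hP'e).1 hcr
        · rw [hx', hy']; exact fun hcr => (hnc P' hP't hP'1 hP'2 u v hP'e).2 hcr
      · rcases hxy with ⟨hx', hy'⟩|⟨hx', hy'⟩|⟨hx', hy'⟩|⟨hx', hy'⟩|⟨hx', hy'⟩|⟨hx', hy'⟩ <;>
          rcases huv with ⟨hu', hv'⟩|⟨hu', hv'⟩|⟨hu', hv'⟩|⟨hu', hv'⟩|⟨hu', hv'⟩|⟨hu', hv'⟩ <;>
          · rw [hx', hy', hu', hv']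
            rintro ⟨hX, hY⟩
            obtain ⟨q1, q2⟩ := between_iff.1 hX
            obtain ⟨q3, q4⟩ := between_iff.1 hY
            omega

end FlipExists
section Final
variable {n : ℕ} [NeZero n]

lemma flips_to_ear (hn : 3 ≤ n) :
    ∀ m : ℕ, ∀ T : PolygonTiling n, ∀ i : ZMod n, Fan n T (i + 1) →
      cwd (i + 1) (cprev n (startTile n T i) i) ≤ m →
      ∃ T' : PolygonTiling n, FlipEquiv n T T' ∧
        ({i, i + 1, i + 2} : Finset (ZMod n)) ∈ T'.tiles := by
  intro m
  induction m with
  | zero =>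
    intro T i hfan hm
    exfalso
    obtain ⟨hQ0, he0⟩ := startTile_spec T i
    set Q0 := startTile n T i with hQ0def
    have hcard : Q0.card = 3 := hfan Q0 hQ0 he0.2.1
    obtain ⟨hQeq, ho1, ho2⟩ := tri_of_card3 hcard he0.1
    rw [← he0.2.2.2] at ho1 ho2
    set p := cprev n Q0 i with hpdef
    have hpw : p ≠ i + 1 := by
      intro h
      rw [h] at ho2
      omega
    have := cwd_pos_of_ne hpw
    omega
  | succ m ih =>
    intro T i hfan hm
    obtain ⟨hQ0, he0⟩ := startTile_spec T i
    set Q0 := startTile n T i with hQ0def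
    have hcard : Q0.card = 3 := hfan Q0 hQ0 he0.2.1
    obtain ⟨hQeq, ho1, ho2⟩ := tri_of_card3 hcard he0.1
    rw [← he0.2.2.2] at ho1 ho2 hQeq
    set p := cprev n Q0 i with hpdef
    by_cases hp2 : p = i + 2
    · refine ⟨T, Relation.EqvGen.refl T, ?_⟩
      rw [← hp2, ← hQeq]
      exact hQ0
    · -- flip the first two triangles of the fan
      obtain ⟨te1, te2, te3⟩ := tri_edges ho1 ho2
      rw [← hQeq] at te1 te2 te3
      obtain ⟨tf1, tf2, tf3, tf4, tf5, tf6⟩ := tri_facts ho1 ho2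
      rw [← hQeq] at tf1 tf2 tf3 tf4 tf5 tf6
      have hdiagc : p ≠ (i + 1) + 1 := by
        intro h
        rw [show (i+1)+1 = i + 2 by ring] at h
        exact hp2 h
      obtain ⟨Q1, ⟨hQ1mem, hQ1ne, hQ1e⟩, _⟩ := T.diag_shared Q0 hQ0 (i+1) p te2 hdiagc
      have hwQ1 : (i + 1) ∈ Q1 := hQ1e.2.1
      have hcard1 : Q1.card = 3 := hfan Q1 hQ1mem hwQ1
      obtain ⟨hQ1eq, hu1, hu2⟩ := tri_of_card3 hcard1 hQ1e.1
      rw [← hQ1e.2.2.2] at hu1 hu2 hQ1eq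
      set u := cprev n Q1 p with hudef
      -- coordinates
      have hiw : 0 < cwd i (i + 1) := ho1
      have hip : cwd i (i + 1) < cwd i p := ho2
      have hiplt := cwd_lt i p
      have hinep : i ≠ p := fun h => by rw [← h, cwd_self] at hip; omega
      have hpirev := cwd_rev hinep
      have hpw' : cwd p (i + 1) = n - cwd i p + cwd i (i + 1) := cwd_base_change hinep hip
      have hpu : cwd p (i + 1) < cwd p u := hu2
      have hpu_lt := cwd_lt p u
      have hpnu : p ≠ u := fun h => by rw [← h, cwd_self] at hu2; omega
      have hwu : cwd (i+1) u = cwd p u - cwd p (i+1) := cwd_sub_coord (le_of_lt hu2)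
      have hwp : cwd (i+1) p = n - cwd p (i+1) := by
        have hpw2 : p ≠ i + 1 := by
          intro h
          rw [h, cwd_self] at hu1
          omega
        have := cwd_rev hpw2
        omega
      -- the two Between facts for the flip ⟨a,b,c,d⟩ = ⟨i+1, u, p, i⟩
      have hb1 : Between n (i+1) u p := between_iff.2 ⟨by omega, by omega⟩
      have hb2 : Between n p i (i+1) := between_iff.2 ⟨by omega, by omega⟩
      -- the two tiles
      have hset1 : ({i+1, u, p} : Finset (ZMod n)) = {p, i+1, u} := by
        ext e
        simp only [Finset.mem_insert, Finset.mem_singleton]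
        tauto
      have hset2 : ({i+1, p, i} : Finset (ZMod n)) = {i, i+1, p} := by
        ext e
        simp only [Finset.mem_insert, Finset.mem_singleton]
        tauto
      have ht1' : ({i+1, u, p} : Finset (ZMod n)) ∈ T.tiles := by
        rw [hset1, ← hQ1eq]; exact hQ1mem
      have ht2' : ({i+1, p, i} : Finset (ZMod n)) ∈ T.tiles := by
        rw [hset2, ← hQeq]; exact hQ0
      obtain ⟨T2, hstep, htiles⟩ := flip_exists hn T hb1 hb2 ht1' ht2'
      have hfan2 : Fan n T2 (i + 1) := fan_flipstep hstep (i+1) hfan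
      -- the new tile at the boundary edge (i, i+1)
      have hset3 : ({i, i+1, u} : Finset (ZMod n)) = {i+1, u, i} := by
        ext e
        simp only [Finset.mem_insert, Finset.mem_singleton]
        tauto
      have hmemT2 : ({i, i+1, u} : Finset (ZMod n)) ∈ T2.tiles := by
        rw [hset3, htiles]
        exact Finset.mem_union_right _ (Finset.mem_insert_self _ _)
      have hiu : cwd i u = cwd i (i+1) + cwd (i+1) u := by
        rcases cwd_add_cases i (i+1) u with h|h
        · exact h
        · exfalso
          omega
      have hiu' : cwd i (i+1) < cwd i u := by
        have : 0 < cwd (i+1) u := by omega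
        omega
      obtain ⟨ne1, ne2, ne3⟩ := tri_edges (x := i) (y := i+1) (z := u) ho1 hiu'
      obtain ⟨nf1, nf2, nf3, nf4, nf5, nf6⟩ := tri_facts (x := i) (y := i+1) (z := u) ho1 hiu'
      have hstart2 : startTile n T2 i = {i, i+1, u} := by
        obtain ⟨hs1, hs2⟩ := startTile_spec T2 i
        exact ExistsUnique.unique (T2.boundary_edge i) ⟨hs1, hs2⟩ ⟨hmemT2, ne1⟩
      have hmeas : cwd (i + 1) (cprev n (startTile n T2 i) i) ≤ m := by
        rw [hstart2, nf4]
        omega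
      obtain ⟨T', hequiv, hear⟩ := ih T2 i hfan2 hmeas
      exact ⟨T', Relation.EqvGen.trans _ _ _ (Relation.EqvGen.rel _ _ hstep) hequiv, hear⟩

end Final
theorem stmt13 (n : ℕ) (hn : 3 ≤ n) (T : PolygonTiling n) (i : ZMod n) :
    scott n T i = i + 2 ↔
      ∃ T' : PolygonTiling n, FlipEquiv n T T' ∧
        ({i, i + 1, i + 2} : Finset (ZMod n)) ∈ T'.tiles := by
  haveI : NeZero n := ⟨by omega⟩
  rw [scott_eq_iff_fan hn T i]
  constructor
  · intro hfan
    exact flips_to_ear hn _ T i hfan (le_refl _)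
  · rintro ⟨T', hequiv, hear⟩
    exact (fan_flipequiv hequiv (i + 1)).2 (fan_of_ear hn T' i hear)
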